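/- arXiv:2209.01584 — 3 statements merged into one kernel-verified Lean document; each statement's English description precedes it below -/
import Mathlib

section
/- Let ε, δ ∈ (0,1] be reals and let n, m, k, r be positive integers with n ≥ m ≥ k and binom(m,k) ≥ (3r/ε²)·ln(2rn/δ). Then there exists an (ε,δ,m)-balanced coloring γ : C([n],k) → [r]. -/
open Finset Real
open scoped Classical

/-! ### Auxiliary analytic lemmas -/

private lemma aux_log_ge (x : ℝ) (hx : 0 ≤ x) : 2*x/(2+x) ≤ Real.log (1+x) := by
  set g : ℝ → ℝ := fun y => (2+y) * Real.log (1+y) - 2*y with hg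
  have hd : ∀ y ∈ Set.Ioi (0:ℝ), HasDerivAt g (Real.log (1+y) + (2+y)/(1+y) - 2) y := by
    intro y hy
    have h1 : (0:ℝ) < 1 + y := by simp at hy; linarith
    have hlog : HasDerivAt (fun y : ℝ => Real.log (1+y)) (1/(1+y)) y := by
      simpa [Function.comp_def] using ((Real.hasDerivAt_log h1.ne').comp y ((hasDerivAt_id y).const_add 1))
    have := ((hasDerivAt_id y).const_add 2).mul hlog
    have h2 := this.sub ((hasDerivAt_id y).const_mul 2)
    have h3 : HasDerivAt g (1 * Real.log (1 + y) + (2 + id y) * (1 / (1 + y)) - 2 * 1) y := h2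
    refine h3.congr_deriv ?_
    simp [div_eq_mul_inv]
  have hmono : MonotoneOn g (Set.Ici 0) := by
    apply monotoneOn_of_deriv_nonneg (convex_Ici 0)
    · apply ContinuousOn.sub
      · exact (continuousOn_const.add continuousOn_id).mul
          ((Real.continuousOn_log.comp (continuousOn_const.add continuousOn_id)
            (fun y hy => by simp at hy ⊢; intro hc; nlinarith)))
      · exact continuousOn_const.mul continuousOn_id
    · intro y hy
      rw [interior_Ici] at hy
      exact ((hd y hy).differentiableAt).differentiableWithinAt
    · intro y hy
      rw [interior_Ici] at hy
      rw [(hd y hy).deriv]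
      have h1 : (0:ℝ) < 1 + y := by simp at hy; linarith
      have hl : 1 - 1/(1+y) ≤ Real.log (1+y) := by
        have := Real.log_le_sub_one_of_pos (x := (1+y)⁻¹) (by positivity)
        rw [Real.log_inv] at this
        have : -(1+y)⁻¹ + 1 ≤ Real.log (1+y) := by linarith
        rw [one_div]; linarith
      have : (2+y)/(1+y) = 1 + 1/(1+y) := by field_simp; ring
      rw [this]; linarith
  have := hmono (Set.self_mem_Ici) (Set.mem_Ici.2 hx) hx
  simp only [hg] at this
  simp at this
  rw [div_le_iff₀ (by linarith : (0:ℝ) < 2+x)]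
  nlinarith [this]

private lemma aux_upper_ineq (ε : ℝ) (h0 : 0 ≤ ε) (h1 : ε ≤ 1) :
    ε + ε ^ 2 / 3 ≤ (1 + ε) * Real.log (1 + ε) := by
  have hlg := aux_log_ge ε h0
  have h2 : (1+ε) * (2*ε/(2+ε)) ≤ (1+ε) * Real.log (1+ε) :=
    mul_le_mul_of_nonneg_left hlg (by linarith)
  have h3 : ε + ε^2/3 ≤ (1+ε) * (2*ε/(2+ε)) := by
    rw [mul_div_assoc', le_div_iff₀ (by linarith : (0:ℝ) < 2+ε)]
    nlinarith [sq_nonneg ε, mul_nonneg (mul_nonneg h0 h0) (sub_nonneg.2 h1)]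
  linarith

private lemma aux_lower_ineq (ε : ℝ) (h0 : 0 ≤ ε) (h1 : ε < 1) :
    ε ^ 2 / 2 - ε ≤ (1 - ε) * Real.log (1 - ε) := by
  have hu : (0:ℝ) < 1 - ε := by linarith
  have hx : (1:ℝ) ≤ (1 - ε)⁻¹ := by
    rw [le_inv_comm₀] <;> simp <;> linarith
  have hlog : Real.log ((1-ε)⁻¹) ≤ ((1-ε)⁻¹ - (1-ε)) / 2 := by
    rcases eq_or_lt_of_le hx with h | h
    · rw [← h]; simp; positivity
    · have h0' : 0 < Real.log ((1-ε)⁻¹) := Real.log_pos h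
      have := (Real.self_lt_sinh_iff (x := Real.log ((1-ε)⁻¹))).2 h0'
      rw [Real.sinh_log (by positivity)] at this
      rw [inv_inv] at this
      linarith
  rw [Real.log_inv] at hlog
  have h2 : (1 - ε) * Real.log (1-ε) ≥ -(1-ε) * (((1-ε)⁻¹ - (1-ε)) / 2) := by
    nlinarith [hlog]
  have h3 : (1-ε) * (1-ε)⁻¹ = 1 := mul_inv_cancel₀ hu.ne'
  nlinarith [h2, h3]

/-! ### The finitary Chernoff bound -/

section Chernoff

variable {ι : Type*} [Fintype ι] [DecidableEq ι]

private lemma sum_exp_count (r : ℕ) (D : Finset ι) (i : Fin r) (t : ℝ) :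
    ∑ f : ι → Fin r, Real.exp (t * ((D.filter (fun x => f x = i)).card : ℝ))
      = (r:ℝ) ^ (Fintype.card ι - D.card) * ((r - 1 : ℝ) + Real.exp t) ^ D.card := by
  have hr : 0 < r := i.pos
  have key : ∀ f : ι → Fin r, Real.exp (t * ((D.filter (fun x => f x = i)).card : ℝ))
      = ∏ x : ι, (if x ∈ D ∧ f x = i then Real.exp t else 1) := by
    intro f
    rw [Finset.prod_ite, Finset.prod_const, Finset.prod_const, one_pow, mul_one]
    have hfe : univ.filter (fun x => x ∈ D ∧ f x = i) = D.filter (fun x => f x = i) := by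
      ext x; simp
    rw [hfe, mul_comm, Real.exp_nat_mul]
  simp_rw [key]
  rw [← Fintype.prod_sum (fun x (c : Fin r) => if x ∈ D ∧ c = i then Real.exp t else 1)]
  have hcol : ∀ x : ι, (∑ c : Fin r, if x ∈ D ∧ c = i then Real.exp t else 1)
      = if x ∈ D then (r - 1 : ℝ) + Real.exp t else (r : ℝ) := by
    intro x
    by_cases hx : x ∈ D
    · simp only [hx, true_and, if_pos]
      rw [Finset.sum_ite, Finset.sum_const, Finset.sum_const, Finset.filter_eq',
        if_pos (mem_univ i), Finset.card_singleton, Finset.filter_ne',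
        Finset.card_erase_of_mem (mem_univ i), Finset.card_univ, Fintype.card_fin]
      simp [Nat.cast_sub hr]
      ring
    · simp [hx, Finset.card_univ]
  rw [Finset.prod_congr rfl (fun x _ => hcol x), Finset.prod_ite, Finset.prod_const,
    Finset.prod_const, Finset.filter_univ_mem, Finset.filter_not, Finset.filter_univ_mem,
    Finset.card_univ_diff]
  ring

private lemma count_tail_upper (r : ℕ) (D : Finset ι) (i : Fin r) (ε : ℝ)
    (h0 : 0 < ε) (h1 : ε ≤ 1) :
    ((univ.filter (fun f : ι → Fin r =>
        ((1+ε)/r) * D.card < ((D.filter (fun x => f x = i)).card : ℝ))).card : ℝ)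
      ≤ Real.exp (-(ε^2 * D.card)/(3*r)) * (r:ℝ) ^ (Fintype.card ι) := by
  have hr : 0 < r := i.pos
  have hrR : (0:ℝ) < r := by exact_mod_cast hr
  set t : ℝ := Real.log (1+ε) with htdef
  have hexpt : Real.exp t = 1 + ε := Real.exp_log (by linarith)
  have ht0 : 0 ≤ t := Real.log_nonneg (by linarith)
  set N := D.card with hN
  set a : ℝ := ((1+ε)/r) * N with ha
  have ha0 : 0 ≤ a := by positivity
  set fs := univ.filter (fun f : ι → Fin r =>
      ((1+ε)/r) * D.card < ((D.filter (fun x => f x = i)).card : ℝ)) with hfs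
  have step1 : (fs.card : ℝ) * Real.exp (t*a)
      ≤ ∑ f : ι → Fin r, Real.exp (t * ((D.filter (fun x => f x = i)).card : ℝ)) := by
    calc (fs.card : ℝ) * Real.exp (t*a) = ∑ _f ∈ fs, Real.exp (t*a) := by
          rw [Finset.sum_const, nsmul_eq_mul]
      _ ≤ ∑ f ∈ fs, Real.exp (t * ((D.filter (fun x => f x = i)).card : ℝ)) := by
          refine Finset.sum_le_sum (fun f hf => ?_)
          have h2 := (Finset.mem_filter.1 hf).2
          exact Real.exp_le_exp.2 (mul_le_mul_of_nonneg_left h2.le ht0)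
      _ ≤ _ := Finset.sum_le_sum_of_subset_of_nonneg (Finset.filter_subset _ _)
          (fun _ _ _ => (Real.exp_pos _).le)
  rw [sum_exp_count] at step1
  have hbase : (0:ℝ) ≤ (r - 1 : ℝ) + Real.exp t := by
    have : (1:ℝ) ≤ r := by exact_mod_cast hr
    have := Real.exp_pos t
    linarith
  have hpow : ((r - 1 : ℝ) + Real.exp t) ^ N ≤ ((r:ℝ) * Real.exp (ε/r)) ^ N := by
    apply pow_le_pow_left₀ hbase
    have : (r:ℝ) * (1 + ε/r) = r + ε := by field_simp
    calc (r - 1 : ℝ) + Real.exp t = r + ε - 1 + 1 := by rw [hexpt]; ring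
      _ = (r:ℝ) * (1 + ε/r) := by rw [this]; ring
      _ ≤ (r:ℝ) * Real.exp (ε/r) := by
          apply mul_le_mul_of_nonneg_left _ hrR.le
          have := Real.add_one_le_exp (ε/r); linarith
  have hcard : (fs.card : ℝ) ≤ (r:ℝ) ^ (Fintype.card ι - N) * ((r:ℝ) * Real.exp (ε/r)) ^ N
      * Real.exp (-(t*a)) := by
    rw [Real.exp_neg]
    rw [← le_div_iff₀ (Real.exp_pos _)] at step1
    calc (fs.card : ℝ) ≤ (r:ℝ) ^ (Fintype.card ι - N) * ((r - 1 : ℝ) + Real.exp t) ^ N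
          / Real.exp (t*a) := step1
      _ ≤ _ := by
          rw [div_eq_mul_inv]
          apply mul_le_mul_of_nonneg_right _ (by positivity)
          exact mul_le_mul_of_nonneg_left hpow (by positivity)
  have hNM : N ≤ Fintype.card ι := Finset.card_le_univ D
  have hsplit : (r:ℝ) ^ (Fintype.card ι - N) * ((r:ℝ) * Real.exp (ε/r)) ^ N
      * Real.exp (-(t*a))
      = (r:ℝ) ^ (Fintype.card ι) * Real.exp ((ε/r) * N - t*a) := by
    have hMM : Fintype.card ι - N + N = Fintype.card ι := Nat.sub_add_cancel hNM
    calc (r:ℝ) ^ (Fintype.card ι - N) * ((r:ℝ) * Real.exp (ε/r)) ^ N * Real.exp (-(t*a))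
        = (r:ℝ) ^ (Fintype.card ι - N) * (r:ℝ) ^ N
            * (Real.exp ((N:ℝ)*(ε/r)) * Real.exp (-(t*a))) := by
          rw [mul_pow, ← Real.exp_nat_mul]; ring
      _ = (r:ℝ) ^ (Fintype.card ι) * Real.exp ((ε/r) * N - t*a) := by
          rw [← pow_add, hMM, ← Real.exp_add]
          congr 2
          ring
  have hexparg : (ε/r) * N - t*a ≤ -(ε^2 * N)/(3*r) := by
    have hN0 : (0:ℝ) ≤ N := Nat.cast_nonneg _
    have hui := aux_upper_ineq ε h0.le h1
    have hNr : (0:ℝ) ≤ (N:ℝ)/r := by positivity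
    have := mul_le_mul_of_nonneg_right hui hNr
    have hta : t * a = ((1+ε) * t) * ((N:ℝ)/r) := by rw [ha]; ring
    rw [hta]
    calc (ε/r) * N - ((1+ε)*t) * ((N:ℝ)/r)
        = ε * ((N:ℝ)/r) - ((1+ε) * Real.log (1+ε)) * ((N:ℝ)/r) := by rw [htdef]; ring
      _ ≤ ε * ((N:ℝ)/r) - (ε + ε^2/3) * ((N:ℝ)/r) := by linarith
      _ = -(ε^2 * N)/(3*r) := by field_simp; ring
  calc (fs.card : ℝ) ≤ _ := hcard
    _ = (r:ℝ) ^ (Fintype.card ι) * Real.exp ((ε/r) * N - t*a) := hsplit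
    _ ≤ (r:ℝ) ^ (Fintype.card ι) * Real.exp (-(ε^2 * N)/(3*r)) := by
        apply mul_le_mul_of_nonneg_left (Real.exp_le_exp.2 hexparg) (by positivity)
    _ = _ := by ring

private lemma count_tail_lower (r : ℕ) (D : Finset ι) (i : Fin r) (ε : ℝ)
    (h0 : 0 < ε) (h1 : ε ≤ 1) :
    ((univ.filter (fun f : ι → Fin r =>
        ((D.filter (fun x => f x = i)).card : ℝ) < ((1-ε)/r) * D.card)).card : ℝ)
      ≤ Real.exp (-(ε^2 * D.card)/(3*r)) * (r:ℝ) ^ (Fintype.card ι) := by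
  have hr : 0 < r := i.pos
  have hrR : (0:ℝ) < r := by exact_mod_cast hr
  rcases eq_or_lt_of_le h1 with h1' | h1'
  · have : (univ.filter (fun f : ι → Fin r =>
        ((D.filter (fun x => f x = i)).card : ℝ) < ((1-ε)/r) * D.card)) = ∅ := by
      apply Finset.filter_eq_empty_iff.2
      intro f _
      rw [← h1']
      simp only [sub_self, zero_div, zero_mul, not_lt]
      positivity
    rw [this]
    simp only [Finset.card_empty, Nat.cast_zero]
    positivity
  set t : ℝ := Real.log (1-ε) with htdef
  have h1e : (0:ℝ) < 1 - ε := by linarith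
  have hexpt : Real.exp t = 1 - ε := Real.exp_log h1e
  have ht0 : t ≤ 0 := Real.log_nonpos (by linarith) (by linarith)
  set N := D.card with hN
  set a : ℝ := ((1-ε)/r) * N with ha
  set fs := univ.filter (fun f : ι → Fin r =>
      ((D.filter (fun x => f x = i)).card : ℝ) < ((1-ε)/r) * D.card) with hfs
  have step1 : (fs.card : ℝ) * Real.exp (t*a)
      ≤ ∑ f : ι → Fin r, Real.exp (t * ((D.filter (fun x => f x = i)).card : ℝ)) := by
    calc (fs.card : ℝ) * Real.exp (t*a) = ∑ _f ∈ fs, Real.exp (t*a) := by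
          rw [Finset.sum_const, nsmul_eq_mul]
      _ ≤ ∑ f ∈ fs, Real.exp (t * ((D.filter (fun x => f x = i)).card : ℝ)) := by
          refine Finset.sum_le_sum (fun f hf => ?_)
          have h2 := (Finset.mem_filter.1 hf).2
          exact Real.exp_le_exp.2 (mul_le_mul_of_nonpos_left h2.le ht0)
      _ ≤ _ := Finset.sum_le_sum_of_subset_of_nonneg (Finset.filter_subset _ _)
          (fun _ _ _ => (Real.exp_pos _).le)
  rw [sum_exp_count] at step1
  have hbase : (0:ℝ) ≤ (r - 1 : ℝ) + Real.exp t := by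
    have : (1:ℝ) ≤ r := by exact_mod_cast hr
    have := Real.exp_pos t
    linarith
  have hpow : ((r - 1 : ℝ) + Real.exp t) ^ N ≤ ((r:ℝ) * Real.exp (-ε/r)) ^ N := by
    apply pow_le_pow_left₀ hbase
    calc (r - 1 : ℝ) + Real.exp t = (r:ℝ) * (1 + (-ε)/r) := by rw [hexpt]; field_simp; ring
      _ ≤ (r:ℝ) * Real.exp (-ε/r) := by
          apply mul_le_mul_of_nonneg_left _ hrR.le
          have := Real.add_one_le_exp (-ε/r); linarith
  have hcard : (fs.card : ℝ) ≤ (r:ℝ) ^ (Fintype.card ι - N) * ((r:ℝ) * Real.exp (-ε/r)) ^ N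
      * Real.exp (-(t*a)) := by
    rw [Real.exp_neg]
    rw [← le_div_iff₀ (Real.exp_pos _)] at step1
    calc (fs.card : ℝ) ≤ (r:ℝ) ^ (Fintype.card ι - N) * ((r - 1 : ℝ) + Real.exp t) ^ N
          / Real.exp (t*a) := step1
      _ ≤ _ := by
          rw [div_eq_mul_inv]
          apply mul_le_mul_of_nonneg_right _ (by positivity)
          exact mul_le_mul_of_nonneg_left hpow (by positivity)
  have hNM : N ≤ Fintype.card ι := Finset.card_le_univ D
  have hsplit : (r:ℝ) ^ (Fintype.card ι - N) * ((r:ℝ) * Real.exp (-ε/r)) ^ N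
      * Real.exp (-(t*a))
      = (r:ℝ) ^ (Fintype.card ι) * Real.exp ((-ε/r) * N - t*a) := by
    have hMM : Fintype.card ι - N + N = Fintype.card ι := Nat.sub_add_cancel hNM
    calc (r:ℝ) ^ (Fintype.card ι - N) * ((r:ℝ) * Real.exp (-ε/r)) ^ N * Real.exp (-(t*a))
        = (r:ℝ) ^ (Fintype.card ι - N) * (r:ℝ) ^ N
            * (Real.exp ((N:ℝ)*(-ε/r)) * Real.exp (-(t*a))) := by
          rw [mul_pow, ← Real.exp_nat_mul]; ring
      _ = (r:ℝ) ^ (Fintype.card ι) * Real.exp ((-ε/r) * N - t*a) := by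
          rw [← pow_add, hMM, ← Real.exp_add]
          congr 2
          ring
  have hexparg : (-ε/r) * N - t*a ≤ -(ε^2 * N)/(3*r) := by
    have hN0 : (0:ℝ) ≤ N := Nat.cast_nonneg _
    have hui := aux_lower_ineq ε h0.le h1'
    have hNr : (0:ℝ) ≤ (N:ℝ)/r := by positivity
    have hmul := mul_le_mul_of_nonneg_right hui hNr
    have hta : t * a = ((1-ε) * t) * ((N:ℝ)/r) := by rw [ha]; ring
    rw [hta]
    calc (-ε/r) * N - ((1-ε)*t) * ((N:ℝ)/r)
        = -(ε * ((N:ℝ)/r)) - ((1-ε) * Real.log (1-ε)) * ((N:ℝ)/r) := by rw [htdef]; ring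
      _ ≤ -(ε * ((N:ℝ)/r)) - (ε^2/2 - ε) * ((N:ℝ)/r) := by linarith
      _ = -(ε^2 * N)/(2*r) := by field_simp; ring
      _ ≤ -(ε^2 * N)/(3*r) := by
          rw [div_le_div_iff₀ (by positivity) (by positivity)]
          nlinarith [mul_nonneg (mul_nonneg (sq_nonneg ε) hN0) hrR.le]
  calc (fs.card : ℝ) ≤ _ := hcard
    _ = (r:ℝ) ^ (Fintype.card ι) * Real.exp ((-ε/r) * N - t*a) := hsplit
    _ ≤ (r:ℝ) ^ (Fintype.card ι) * Real.exp (-(ε^2 * N)/(3*r)) := by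
        apply mul_le_mul_of_nonneg_left (Real.exp_le_exp.2 hexparg) (by positivity)
    _ = _ := by ring

end Chernoff

/-! ### Counting bridges -/

private lemma card_subsets {n k : ℕ} (A : Finset (Fin n)) :
    ((univ.filter (fun S : {S : Finset (Fin n) // S.card = k} => S.1 ⊆ A)).card)
      = A.card.choose k := by
  rw [← Finset.card_powersetCard k A]
  apply Finset.card_bij (fun S _ => S.1)
  · intro S hS
    simp only [Finset.mem_filter, Finset.mem_univ, true_and] at hS
    rw [Finset.mem_powersetCard]
    exact ⟨hS, S.2⟩
  · intro S _ S' _ hss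
    exact Subtype.ext hss
  · intro B hB
    rw [Finset.mem_powersetCard] at hB
    exact ⟨⟨B, hB.2⟩, by simp [hB.1], rfl⟩

private lemma card_sets {n ℓ : ℕ} :
    ((univ.filter (fun A : Finset (Fin n) => A.card = ℓ)).card) = n.choose ℓ := by
  have : (univ.filter (fun A : Finset (Fin n) => A.card = ℓ))
      = Finset.powersetCard ℓ (univ : Finset (Fin n)) := by
    ext A; simp [Finset.mem_powersetCard]
  rw [this, Finset.card_powersetCard, Finset.card_univ, Fintype.card_fin]

/-- The coloring `γ` of the `k`-element subsets of `{1,…,n}` with `r` colors is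
`ε`-balanced on `A`. -/
def EpsBalancedOn {n k r : ℕ} (γ : {S : Finset (Fin n) // S.card = k} → Fin r) (ε : ℝ)
    (A : Finset (Fin n)) : Prop :=
  ∀ i : Fin r,
    ((1 - ε) / r) * (A.card.choose k : ℝ) ≤
      (Nat.card {S : {S : Finset (Fin n) // S.card = k} // γ S = i ∧ S.1 ⊆ A} : ℝ) ∧
    (Nat.card {S : {S : Finset (Fin n) // S.card = k} // γ S = i ∧ S.1 ⊆ A} : ℝ) ≤
      ((1 + ε) / r) * (A.card.choose k : ℝ)

/-- `γ` is `(ε,δ,m)`-balanced: for each `ℓ ∈ {m,…,n}`, a uniformly random `ℓ`-element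
subset of `{1,…,n}` is `ε`-balanced for `γ` with probability at least `1 - δ`. -/
def IsBalancedColoring {n k r : ℕ} (m : ℕ) (ε δ : ℝ)
    (γ : {S : Finset (Fin n) // S.card = k} → Fin r) : Prop :=
  ∀ ℓ : ℕ, m ≤ ℓ → ℓ ≤ n →
    (1 - δ) * (n.choose ℓ : ℝ) ≤
      (Nat.card {A : Finset (Fin n) // A.card = ℓ ∧ EpsBalancedOn γ ε A} : ℝ)

private lemma natcard_bridge {n k r : ℕ} (γ : {S : Finset (Fin n) // S.card = k} → Fin r)
    (i : Fin r) (A : Finset (Fin n)) :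
    Nat.card {S : {S : Finset (Fin n) // S.card = k} // γ S = i ∧ S.1 ⊆ A}
      = ((univ.filter (fun S : {S : Finset (Fin n) // S.card = k} => S.1 ⊆ A)).filter
          (fun S => γ S = i)).card := by
  rw [Nat.card_eq_fintype_card, Fintype.card_subtype, Finset.filter_filter]
  congr 1
  ext S
  simp [and_comm]

/-- Union bound over the `r` colors and two tails for a fixed set `A`. -/
private lemma bad_count {n k r : ℕ} (hr : 0 < r) (ε : ℝ) (h0 : 0 < ε) (h1 : ε ≤ 1)
    (A : Finset (Fin n)) :
    ((univ.filter (fun γ : {S : Finset (Fin n) // S.card = k} → Fin r =>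
        ¬ EpsBalancedOn γ ε A)).card : ℝ)
      ≤ 2 * r * Real.exp (-(ε^2 * (A.card.choose k : ℕ))/(3*r))
          * (r:ℝ) ^ (Fintype.card {S : Finset (Fin n) // S.card = k}) := by
  set ι := {S : Finset (Fin n) // S.card = k} with hι
  set D : Finset ι := univ.filter (fun S : ι => S.1 ⊆ A) with hDdef
  have hD : D.card = A.card.choose k := card_subsets A
  set fsL : Fin r → Finset (ι → Fin r) := fun i => univ.filter (fun γ =>
      ((D.filter (fun S => γ S = i)).card : ℝ) < ((1-ε)/r) * D.card) with hfsL
  set fsH : Fin r → Finset (ι → Fin r) := fun i => univ.filter (fun γ =>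
      ((1+ε)/r) * D.card < ((D.filter (fun S => γ S = i)).card : ℝ)) with hfsH
  have hsub : univ.filter (fun γ : ι → Fin r => ¬ EpsBalancedOn γ ε A)
      ⊆ univ.biUnion (fun i : Fin r => fsL i ∪ fsH i) := by
    intro γ hγ
    simp only [Finset.mem_filter, Finset.mem_univ, true_and] at hγ
    rw [EpsBalancedOn] at hγ
    push_neg at hγ
    obtain ⟨i, hi⟩ := hγ
    rw [Finset.mem_biUnion]
    refine ⟨i, mem_univ i, ?_⟩
    rw [Finset.mem_union]
    have hX : (Nat.card {S : ι // γ S = i ∧ S.1 ⊆ A} : ℝ)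
        = ((D.filter (fun S => γ S = i)).card : ℝ) := by
      rw [natcard_bridge]
    rw [hX] at hi
    by_cases hlo : ((1 - ε) / r) * (A.card.choose k : ℝ)
        ≤ ((D.filter (fun S => γ S = i)).card : ℝ)
    · right
      have := hi hlo
      simp only [hfsH, Finset.mem_filter, Finset.mem_univ, true_and]
      rw [hD]
      exact this
    · left
      simp only [hfsL, Finset.mem_filter, Finset.mem_univ, true_and]
      rw [hD]
      exact lt_of_not_ge hlo
  have hcard : (univ.filter (fun γ : ι → Fin r => ¬ EpsBalancedOn γ ε A)).card
      ≤ ∑ i : Fin r, ((fsL i).card + (fsH i).card) := by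
    calc _ ≤ (univ.biUnion (fun i : Fin r => fsL i ∪ fsH i)).card :=
          Finset.card_le_card hsub
      _ ≤ ∑ i : Fin r, (fsL i ∪ fsH i).card := Finset.card_biUnion_le
      _ ≤ ∑ i : Fin r, ((fsL i).card + (fsH i).card) :=
          Finset.sum_le_sum (fun i _ => Finset.card_union_le _ _)
  have hcast : ((univ.filter (fun γ : ι → Fin r => ¬ EpsBalancedOn γ ε A)).card : ℝ)
      ≤ ∑ i : Fin r, (((fsL i).card : ℝ) + ((fsH i).card : ℝ)) := by
    exact_mod_cast hcard
  have hterm : ∀ i : Fin r, (((fsL i).card : ℝ) + ((fsH i).card : ℝ))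
      ≤ 2 * (Real.exp (-(ε^2 * D.card)/(3*r)) * (r:ℝ) ^ (Fintype.card ι)) := by
    intro i
    have hL := count_tail_lower r D i ε h0 h1
    have hH := count_tail_upper r D i ε h0 h1
    rw [hfsL, hfsH] at *
    linarith
  calc ((univ.filter (fun γ : ι → Fin r => ¬ EpsBalancedOn γ ε A)).card : ℝ)
      ≤ ∑ i : Fin r, (((fsL i).card : ℝ) + ((fsH i).card : ℝ)) := hcast
    _ ≤ ∑ _i : Fin r, 2 * (Real.exp (-(ε^2 * D.card)/(3*r)) * (r:ℝ) ^ (Fintype.card ι)) :=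
        Finset.sum_le_sum (fun i _ => hterm i)
    _ = r * (2 * (Real.exp (-(ε^2 * D.card)/(3*r)) * (r:ℝ) ^ (Fintype.card ι))) := by
        rw [Finset.sum_const, Finset.card_univ, Fintype.card_fin, nsmul_eq_mul]
    _ = 2 * r * Real.exp (-(ε^2 * (A.card.choose k : ℕ))/(3*r))
          * (r:ℝ) ^ (Fintype.card ι) := by rw [hD]; ring

set_option maxHeartbeats 2000000 in
/-- Lemma 3.2 of the paper: existence of balanced colorings. -/
theorem balanced_coloring_exists (ε δ : ℝ) (hε : ε ∈ Set.Ioc (0 : ℝ) 1)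
    (hδ : δ ∈ Set.Ioc (0 : ℝ) 1) (n m k r : ℕ)
    (hk : 0 < k) (hr : 0 < r) (hkm : k ≤ m) (hmn : m ≤ n)
    (h : (3 * r / ε ^ 2) * Real.log (2 * r * n / δ) ≤ (m.choose k : ℝ)) :
    ∃ γ : {S : Finset (Fin n) // S.card = k} → Fin r, IsBalancedColoring m ε δ γ := by
  obtain ⟨hε0, hε1⟩ := hε
  obtain ⟨hδ0, hδ1⟩ := hδ
  have hn : 0 < n := lt_of_lt_of_le hk (hkm.trans hmn)
  have hm : 0 < m := lt_of_lt_of_le hk hkm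
  set ι := {S : Finset (Fin n) // S.card = k} with hι
  set M := Fintype.card ι with hM
  have hrR : (0:ℝ) < r := by exact_mod_cast hr
  have hnR : (0:ℝ) < n := by exact_mod_cast hn
  -- the key exponential bound
  have hexp : Real.exp (-(ε^2 * (m.choose k : ℕ))/(3*r)) ≤ δ/(2*r*n) := by
    have harg : (0:ℝ) < 2*r*n/δ := by positivity
    have hlog : Real.log (2*r*n/δ) ≤ ε^2 * (m.choose k : ℝ)/(3*r) := by
      rw [div_mul_eq_mul_div, div_le_iff₀ (by positivity : (0:ℝ) < ε^2)] at h
      rw [le_div_iff₀ (by positivity : (0:ℝ) < 3*r)]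
      nlinarith [h]
    have : -(ε^2 * (m.choose k : ℕ))/(3*r) ≤ Real.log (δ/(2*r*n)) := by
      rw [show δ/(2*r*n) = (2*r*n/δ)⁻¹ by field_simp, Real.log_inv]
      rw [neg_div]
      exact neg_le_neg (by push_cast; linarith [hlog])
    calc Real.exp (-(ε^2 * (m.choose k : ℕ))/(3*r)) ≤ Real.exp (Real.log (δ/(2*r*n))) :=
          Real.exp_le_exp.2 this
      _ = δ/(2*r*n) := Real.exp_log (by positivity)
  -- bad count per set A of size ≥ m
  have key : ∀ A : Finset (Fin n), m ≤ A.card →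
      ((univ.filter (fun γ : ι → Fin r => ¬ EpsBalancedOn γ ε A)).card : ℝ)
        ≤ (δ/n) * (r:ℝ)^M := by
    intro A hAm
    have hb := bad_count (k := k) hr ε hε0 hε1 A
    have hmono : Real.exp (-(ε^2 * (A.card.choose k : ℕ))/(3*r))
        ≤ Real.exp (-(ε^2 * (m.choose k : ℕ))/(3*r)) := by
      apply Real.exp_le_exp.2
      have hch : (m.choose k : ℝ) ≤ (A.card.choose k : ℝ) := by
        exact_mod_cast Nat.choose_le_choose k hAm
      rw [neg_div, neg_div, neg_le_neg_iff]
      apply div_le_div_of_nonneg_right _ (by positivity)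
      nlinarith [sq_nonneg ε]
    calc ((univ.filter (fun γ : ι → Fin r => ¬ EpsBalancedOn γ ε A)).card : ℝ)
        ≤ 2 * r * Real.exp (-(ε^2 * (A.card.choose k : ℕ))/(3*r)) * (r:ℝ)^M := hb
      _ ≤ 2 * r * (δ/(2*r*n)) * (r:ℝ)^M := by
          apply mul_le_mul_of_nonneg_right _ (by positivity)
          apply mul_le_mul_of_nonneg_left _ (by positivity)
          exact hmono.trans hexp
      _ = (δ/n) * (r:ℝ)^M := by field_simp
  -- double counting for each ℓ
  set Bad : (ι → Fin r) → ℕ → Finset (Finset (Fin n)) := fun γ ℓ =>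
    univ.filter (fun A => A.card = ℓ ∧ ¬ EpsBalancedOn γ ε A) with hBad
  have hswap : ∀ ℓ : ℕ, m ≤ ℓ → ℓ ≤ n →
      ∑ γ : ι → Fin r, ((Bad γ ℓ).card : ℝ) ≤ (n.choose ℓ : ℝ) * ((δ/n) * (r:ℝ)^M) := by
    intro ℓ hmℓ hℓn
    have hre : ∀ γ : ι → Fin r, (Bad γ ℓ).card
        = ∑ A ∈ univ.filter (fun A : Finset (Fin n) => A.card = ℓ),
            (if ¬ EpsBalancedOn γ ε A then 1 else 0) := by
      intro γ
      simp only [hBad]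
      rw [← Finset.filter_filter, Finset.card_filter]
    calc ∑ γ : ι → Fin r, ((Bad γ ℓ).card : ℝ)
        = ∑ γ : ι → Fin r, ∑ A ∈ univ.filter (fun A : Finset (Fin n) => A.card = ℓ),
            (if ¬ EpsBalancedOn γ ε A then (1:ℝ) else 0) := by
          refine Finset.sum_congr rfl (fun γ _ => ?_)
          rw [hre γ]
          push_cast
          simp
      _ = ∑ A ∈ univ.filter (fun A : Finset (Fin n) => A.card = ℓ),
            ∑ γ : ι → Fin r, (if ¬ EpsBalancedOn γ ε A then (1:ℝ) else 0) :=
          Finset.sum_comm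
      _ = ∑ A ∈ univ.filter (fun A : Finset (Fin n) => A.card = ℓ),
            ((univ.filter (fun γ : ι → Fin r => ¬ EpsBalancedOn γ ε A)).card : ℝ) := by
          refine Finset.sum_congr rfl (fun A _ => ?_)
          rw [Finset.card_filter]
          push_cast
          rfl
      _ ≤ ∑ A ∈ univ.filter (fun A : Finset (Fin n) => A.card = ℓ), (δ/n) * (r:ℝ)^M := by
          refine Finset.sum_le_sum (fun A hA => ?_)
          have hAc := (Finset.mem_filter.1 hA).2
          exact key A (hAc ▸ hmℓ)
      _ = (n.choose ℓ : ℝ) * ((δ/n) * (r:ℝ)^M) := by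
          rw [Finset.sum_const, card_sets, nsmul_eq_mul]
  -- choose a good coloring
  set G : (ι → Fin r) → ℝ := fun γ =>
    ∑ ℓ ∈ Finset.Icc m n, ((Bad γ ℓ).card : ℝ) / (n.choose ℓ : ℝ) with hG
  have hGsum : ∑ γ : ι → Fin r, G γ ≤ δ * (r:ℝ)^M := by
    rw [hG]
    rw [Finset.sum_comm]
    have hstep : ∀ ℓ ∈ Finset.Icc m n,
        ∑ γ : ι → Fin r, ((Bad γ ℓ).card : ℝ) / (n.choose ℓ : ℝ) ≤ (δ/n) * (r:ℝ)^M := by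
      intro ℓ hℓ
      rw [Finset.mem_Icc] at hℓ
      have hch : (0:ℝ) < (n.choose ℓ : ℝ) := by
        exact_mod_cast Nat.choose_pos hℓ.2
      rw [← Finset.sum_div, div_le_iff₀ hch]
      calc ∑ γ : ι → Fin r, ((Bad γ ℓ).card : ℝ)
          ≤ (n.choose ℓ : ℝ) * ((δ/n) * (r:ℝ)^M) := hswap ℓ hℓ.1 hℓ.2
        _ = (δ/n) * (r:ℝ)^M * (n.choose ℓ : ℝ) := by ring
    calc ∑ ℓ ∈ Finset.Icc m n, ∑ γ : ι → Fin r, ((Bad γ ℓ).card : ℝ) / (n.choose ℓ : ℝ)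
        ≤ ∑ _ℓ ∈ Finset.Icc m n, (δ/n) * (r:ℝ)^M := Finset.sum_le_sum hstep
      _ = ((Finset.Icc m n).card : ℝ) * ((δ/n) * (r:ℝ)^M) := by
          rw [Finset.sum_const, nsmul_eq_mul]
      _ ≤ (n : ℝ) * ((δ/n) * (r:ℝ)^M) := by
          apply mul_le_mul_of_nonneg_right _ (by positivity)
          rw [Nat.card_Icc]
          have : n + 1 - m ≤ n := by omega
          exact_mod_cast this
      _ = δ * (r:ℝ)^M := by field_simp
  have hΓcard : Fintype.card (ι → Fin r) = r ^ M := by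
    rw [Fintype.card_fun, Fintype.card_fin]
  have hne : Nonempty (ι → Fin r) := ⟨fun _ => ⟨0, hr⟩⟩
  have hexists : ∃ γ : ι → Fin r, G γ ≤ δ := by
    by_contra hcon
    push_neg at hcon
    have : ∑ γ : ι → Fin r, δ < ∑ γ : ι → Fin r, G γ := by
      apply Finset.sum_lt_sum_of_nonempty
      · exact Finset.univ_nonempty
      · exact fun γ _ => hcon γ
    rw [Finset.sum_const, Finset.card_univ, hΓcard, nsmul_eq_mul] at this
    push_cast at this
    rw [mul_comm] at this
    linarith [hGsum, this]
  obtain ⟨γ, hγ⟩ := hexists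
  refine ⟨γ, ?_⟩
  intro ℓ hmℓ hℓn
  have hch : (0:ℝ) < (n.choose ℓ : ℝ) := by exact_mod_cast Nat.choose_pos hℓn
  -- each term of G is at most δ
  have hterm : ((Bad γ ℓ).card : ℝ) / (n.choose ℓ : ℝ) ≤ δ := by
    calc ((Bad γ ℓ).card : ℝ) / (n.choose ℓ : ℝ)
        ≤ G γ := by
          rw [hG]
          apply Finset.single_le_sum (f := fun ℓ => ((Bad γ ℓ).card : ℝ) / (n.choose ℓ : ℝ))
            (fun j _ => by positivity) (Finset.mem_Icc.2 ⟨hmℓ, hℓn⟩)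
      _ ≤ δ := hγ
  have hbadle : ((Bad γ ℓ).card : ℝ) ≤ δ * (n.choose ℓ : ℝ) := by
    rw [div_le_iff₀ hch] at hterm
    linarith
  -- good + bad = total
  have hgoodcard : Nat.card {A : Finset (Fin n) // A.card = ℓ ∧ EpsBalancedOn γ ε A}
      = (univ.filter (fun A : Finset (Fin n) => A.card = ℓ ∧ EpsBalancedOn γ ε A)).card := by
    rw [Nat.card_eq_fintype_card, Fintype.card_subtype]
  have hsplit : (univ.filter (fun A : Finset (Fin n) => A.card = ℓ ∧ EpsBalancedOn γ ε A)).card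
      + (Bad γ ℓ).card = n.choose ℓ := by
    simp only [hBad]
    rw [← Finset.filter_filter, ← Finset.filter_filter]
    rw [Finset.card_filter_add_card_filter_not]
    exact card_sets
  rw [hgoodcard]
  have : ((univ.filter (fun A : Finset (Fin n) => A.card = ℓ ∧ EpsBalancedOn γ ε A)).card : ℝ)
      = (n.choose ℓ : ℝ) - ((Bad γ ℓ).card : ℝ) := by
    have := hsplit
    push_cast [← this]
    ring
  rw [this]
  nlinarith [hbadle, hch]
end

section
/- Fix integers n ≥ t ≥ 1 and M ≥ 2, and let z_1, …, z_n be integers (a multiset Z of size n). Then for every real α ∈ [0,1], the probability over a uniformly random t-element subset S of {1,…,n} that disc_M({z_i : i ∈ S}) − disc_M(Z) ≥ α is at most 4M·exp(−tα²/8), where {z_i : i ∈ S} is the sub-multiset of size t indexed by S. -/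
open Finset

namespace DiscHelper

variable {ι : Type*} [Fintype ι] [DecidableEq ι]

lemma square_sum_nonneg (A : Finset ι) (y : ι → ℝ) :
    0 ≤ ∑ i ∈ A, ∑ j ∈ A, (y i - y j) * y i := by
  have h2 : ∑ i ∈ A, ∑ j ∈ A, (y i - y j) * y i
      = ∑ i ∈ A, ∑ j ∈ A, (y j - y i) * y j := Finset.sum_comm
  have h3 : 0 ≤ ∑ i ∈ A, ∑ j ∈ A, ((y i - y j) * y i + (y j - y i) * y j) :=
    Finset.sum_nonneg fun i _ => Finset.sum_nonneg fun j _ => by nlinarith [sq_nonneg (y i - y j)]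
  simp only [Finset.sum_add_distrib] at h3
  linarith

lemma insert_sum (t : ℕ) (y : ι → ℝ) :
    ∑ S ∈ powersetCard t (univ : Finset ι), ∑ i ∈ Sᶜ, (y i * ∏ j ∈ S, y j)
      = (t + 1 : ℝ) * ∑ T ∈ powersetCard (t+1) (univ : Finset ι), ∏ j ∈ T, y j := by
  have hrhs : ∀ T ∈ powersetCard (t+1) (univ : Finset ι),
      (t + 1 : ℝ) * ∏ j ∈ T, y j = ∑ i ∈ T, (y i * ∏ j ∈ T.erase i, y j) := by
    intro T hT
    have hcard : T.card = t + 1 := (mem_powersetCard_univ).1 hT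
    have : ∀ i ∈ T, (y i * ∏ j ∈ T.erase i, y j) = ∏ j ∈ T, y j := fun i hi =>
      Finset.mul_prod_erase T y hi
    rw [Finset.sum_congr rfl this, Finset.sum_const, hcard, nsmul_eq_mul]
    push_cast
    ring
  rw [Finset.mul_sum, Finset.sum_congr rfl hrhs, Finset.sum_sigma', Finset.sum_sigma']
  refine Finset.sum_nbij' (fun x => ⟨insert x.2 x.1, x.2⟩) (fun x => ⟨x.1.erase x.2, x.2⟩)
    ?_ ?_ ?_ ?_ ?_
  · rintro ⟨S, i⟩ hx
    rw [Finset.mem_sigma] at hx ⊢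
    obtain ⟨hS, hi⟩ := hx
    rw [Finset.mem_compl] at hi
    rw [mem_powersetCard_univ] at hS ⊢
    exact ⟨by rw [Finset.card_insert_of_notMem hi, hS], Finset.mem_insert_self _ _⟩
  · rintro ⟨T, i⟩ hx
    rw [Finset.mem_sigma] at hx ⊢
    obtain ⟨hT, hi⟩ := hx
    rw [mem_powersetCard_univ] at hT ⊢
    refine ⟨?_, Finset.mem_compl.2 (Finset.notMem_erase _ _)⟩
    rw [Finset.card_erase_of_mem hi, hT]
    omega
  · rintro ⟨S, i⟩ hx
    rw [Finset.mem_sigma] at hx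
    have hi := Finset.mem_compl.1 hx.2
    simp [Finset.erase_insert hi]
  · rintro ⟨T, i⟩ hx
    rw [Finset.mem_sigma] at hx
    simp [Finset.insert_erase hx.2]
  · rintro ⟨S, i⟩ hx
    rw [Finset.mem_sigma] at hx
    have hi := Finset.mem_compl.1 hx.2
    simp [Finset.erase_insert hi]


lemma D_nonneg (t : ℕ) (y : ι → ℝ) (hy : ∀ i, 0 ≤ y i) :
    0 ≤ ∑ S ∈ powersetCard (t+1) (univ : Finset ι),
        (∑ i ∈ S, ∑ j ∈ Sᶜ, (y i - y j)) * ∏ j ∈ S, y j := by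
  have step1 : ∑ S ∈ powersetCard (t+1) (univ : Finset ι),
        (∑ i ∈ S, ∑ j ∈ Sᶜ, (y i - y j)) * ∏ j ∈ S, y j
      = ∑ S ∈ powersetCard (t+1) (univ : Finset ι),
        ∑ i ∈ S, ((∑ j ∈ Sᶜ, (y i - y j)) * ∏ j ∈ S, y j) := by
    refine Finset.sum_congr rfl fun S _ => ?_
    rw [Finset.sum_mul]
  have step2 : ∑ S ∈ powersetCard (t+1) (univ : Finset ι),
        ∑ i ∈ S, ((∑ j ∈ Sᶜ, (y i - y j)) * ∏ j ∈ S, y j)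
      = ∑ R ∈ powersetCard t (univ : Finset ι),
        ∑ i ∈ Rᶜ, ((∑ j ∈ (insert i R)ᶜ, (y i - y j)) * ∏ j ∈ insert i R, y j) := by
    rw [Finset.sum_sigma', Finset.sum_sigma']
    refine Finset.sum_nbij' (fun x => ⟨x.1.erase x.2, x.2⟩) (fun x => ⟨insert x.2 x.1, x.2⟩)
      ?_ ?_ ?_ ?_ ?_
    · rintro ⟨S, i⟩ hx
      rw [Finset.mem_sigma] at hx ⊢
      obtain ⟨hS, hi⟩ := hx
      rw [mem_powersetCard_univ] at hS ⊢
      refine ⟨?_, Finset.mem_compl.2 (Finset.notMem_erase _ _)⟩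
      rw [Finset.card_erase_of_mem hi, hS]
      omega
    · rintro ⟨R, i⟩ hx
      rw [Finset.mem_sigma] at hx ⊢
      obtain ⟨hR, hi⟩ := hx
      rw [Finset.mem_compl] at hi
      rw [mem_powersetCard_univ] at hR ⊢
      exact ⟨by rw [Finset.card_insert_of_notMem hi, hR], Finset.mem_insert_self _ _⟩
    · rintro ⟨S, i⟩ hx
      rw [Finset.mem_sigma] at hx
      simp [Finset.insert_erase hx.2]
    · rintro ⟨R, i⟩ hx
      rw [Finset.mem_sigma] at hx
      have hi := Finset.mem_compl.1 hx.2
      simp [Finset.erase_insert hi]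
    · rintro ⟨S, i⟩ hx
      rw [Finset.mem_sigma] at hx
      simp [Finset.insert_erase hx.2]
  rw [step1, step2]
  refine Finset.sum_nonneg fun R hR => ?_
  have hterm : ∀ i ∈ Rᶜ, (∑ j ∈ (insert i R)ᶜ, (y i - y j)) * ∏ j ∈ insert i R, y j
      = (∑ j ∈ Rᶜ, (y i - y j) * y i) * ∏ j ∈ R, y j := by
    intro i hi
    have hiR : i ∉ R := Finset.mem_compl.1 hi
    have h1 : ∑ j ∈ (insert i R)ᶜ, (y i - y j) = ∑ j ∈ Rᶜ, (y i - y j) := by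
      rw [Finset.compl_insert]
      exact Finset.sum_erase _ (by ring)
    rw [h1, Finset.prod_insert hiR, Finset.sum_mul, Finset.sum_mul]
    exact Finset.sum_congr rfl fun j _ => by ring
  rw [Finset.sum_congr rfl hterm, ← Finset.sum_mul]
  exact mul_nonneg (square_sum_nonneg _ _) (Finset.prod_nonneg fun j _ => hy j)


lemma corr (t : ℕ) (y : ι → ℝ) (hy : ∀ i, 0 ≤ y i) :
    (t : ℝ) * (∑ i, y i) * ∑ S ∈ powersetCard t (univ : Finset ι), ∏ j ∈ S, y j
      ≤ (Fintype.card ι : ℝ) *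
        ∑ S ∈ powersetCard t (univ : Finset ι), ((∑ i ∈ S, y i) * ∏ j ∈ S, y j) := by
  have key : ∀ S ∈ powersetCard t (univ : Finset ι),
      (∑ i ∈ S, ∑ j ∈ Sᶜ, (y i - y j)) * ∏ j ∈ S, y j
        = (Fintype.card ι : ℝ) * ((∑ i ∈ S, y i) * ∏ j ∈ S, y j)
          - (t : ℝ) * (∑ i, y i) * ∏ j ∈ S, y j := by
    intro S hS
    have hcard : S.card = t := mem_powersetCard_univ.1 hS
    have h2 : ∀ i, ∑ j ∈ Sᶜ, (y i - y j)
        = ((Fintype.card ι : ℝ) * y i - ∑ j, y j) - ((t : ℝ) * y i - ∑ j ∈ S, y j) := by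
      intro i
      have hall := Finset.sum_add_sum_compl S (fun j => y i - y j)
      have hu : ∑ j ∈ (univ : Finset ι), (y i - y j)
          = (Fintype.card ι : ℝ) * y i - ∑ j, y j := by
        rw [Finset.sum_sub_distrib, Finset.sum_const, Finset.card_univ, nsmul_eq_mul]
      have hs : ∑ j ∈ S, (y i - y j) = (t : ℝ) * y i - ∑ j ∈ S, y j := by
        rw [Finset.sum_sub_distrib, Finset.sum_const, hcard, nsmul_eq_mul]
      linarith
    have h1 : ∑ i ∈ S, ∑ j ∈ Sᶜ, (y i - y j)
        = (Fintype.card ι : ℝ) * (∑ i ∈ S, y i) - (t : ℝ) * ∑ i, y i := by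
      rw [Finset.sum_congr rfl (fun i _ => h2 i)]
      simp only [Finset.sum_sub_distrib, Finset.sum_const, hcard, nsmul_eq_mul,
        ← Finset.mul_sum]
      ring
    rw [h1]
    ring
  rcases t with _ | t'
  · simp
  · have hD := D_nonneg t' y hy
    rw [Finset.sum_congr rfl key] at hD
    rw [Finset.sum_sub_distrib, ← Finset.mul_sum, ← Finset.mul_sum] at hD
    linarith

lemma maclaurin (t : ℕ) (y : ι → ℝ) (hy : ∀ i, 0 ≤ y i)
    (htn : t ≤ Fintype.card ι) (hn : 1 ≤ Fintype.card ι) :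
    ∑ S ∈ powersetCard t (univ : Finset ι), ∏ j ∈ S, y j
      ≤ ((Fintype.card ι).choose t : ℝ) * ((∑ i, y i) / (Fintype.card ι : ℝ)) ^ t := by
  induction t with
  | zero => simp
  | succ t ih =>
    have IH := ih (Nat.le_of_succ_le htn)
    have hN0 : (0 : ℝ) < (Fintype.card ι : ℝ) := by exact_mod_cast hn
    set N := (Fintype.card ι : ℝ) with hNdef
    set q := (∑ i, y i) / N with hqdef
    have hq0 : 0 ≤ q := div_nonneg (Finset.sum_nonneg fun i _ => hy i) hN0.le
    have hp1 : (∑ i, y i) = N * q := by rw [hqdef]; field_simp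
    have hE0 : 0 ≤ ∑ S ∈ powersetCard t (univ : Finset ι), ∏ j ∈ S, y j :=
      Finset.sum_nonneg fun S _ => Finset.prod_nonneg fun j _ => hy j
    have hE1 : 0 ≤ ∑ S ∈ powersetCard (t+1) (univ : Finset ι), ∏ j ∈ S, y j :=
      Finset.sum_nonneg fun S _ => Finset.prod_nonneg fun j _ => hy j
    have hsplit : ∀ S ∈ powersetCard t (univ : Finset ι),
        (∑ i, y i) * ∏ j ∈ S, y j
          = (∑ i ∈ S, y i) * ∏ j ∈ S, y j + ∑ i ∈ Sᶜ, (y i * ∏ j ∈ S, y j) := by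
      intro S hS
      rw [← Finset.sum_add_sum_compl S y, add_mul, Finset.sum_mul, Finset.sum_mul]
    have hiden : (∑ i, y i) * (∑ S ∈ powersetCard t (univ : Finset ι), ∏ j ∈ S, y j)
        = (∑ S ∈ powersetCard t (univ : Finset ι), ((∑ i ∈ S, y i) * ∏ j ∈ S, y j))
          + (t + 1 : ℝ) * ∑ T ∈ powersetCard (t+1) (univ : Finset ι), ∏ j ∈ T, y j := by
      rw [Finset.mul_sum, Finset.sum_congr rfl hsplit, Finset.sum_add_distrib, insert_sum]
    have hcorr := corr t y hy
    have h2 : (t + 1 : ℝ) * N * (∑ S ∈ powersetCard (t+1) (univ : Finset ι), ∏ j ∈ S, y j)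
        = N * ((∑ i, y i) * (∑ S ∈ powersetCard t (univ : Finset ι), ∏ j ∈ S, y j))
          - N * (∑ S ∈ powersetCard t (univ : Finset ι), ((∑ i ∈ S, y i) * ∏ j ∈ S, y j)) := by
      linear_combination (-N) * hiden
    have hmain : (t + 1 : ℝ) * N * (∑ S ∈ powersetCard (t+1) (univ : Finset ι), ∏ j ∈ S, y j)
        ≤ (N - t) * (∑ i, y i) * (∑ S ∈ powersetCard t (univ : Finset ι), ∏ j ∈ S, y j) := by
      linarith [h2, hcorr]
    have hch : ((Fintype.card ι).choose (t+1) : ℝ) * (t+1)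
        = ((Fintype.card ι).choose t : ℝ) * (N - t) := by
      have h := Nat.choose_succ_right_eq (Fintype.card ι) t
      calc ((Fintype.card ι).choose (t+1) : ℝ) * (t+1)
          = (((Fintype.card ι).choose (t+1) * (t+1) : ℕ) : ℝ) := by push_cast; ring
        _ = (((Fintype.card ι).choose t * (Fintype.card ι - t) : ℕ) : ℝ) := by rw [h]
        _ = ((Fintype.card ι).choose t : ℝ) * (N - t) := by
            push_cast [Nat.cast_sub (Nat.le_of_succ_le htn)]; rw [hNdef]
    have hNt : (0:ℝ) ≤ N - t := by
      have ht2 : (t:ℝ) ≤ N := by rw [hNdef]; exact_mod_cast Nat.le_of_succ_le htn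
      linarith
    have hsum0 : 0 ≤ ∑ i, y i := Finset.sum_nonneg fun i _ => hy i
    have step : (t + 1 : ℝ) * N * (∑ S ∈ powersetCard (t+1) (univ : Finset ι), ∏ j ∈ S, y j)
        ≤ (t + 1 : ℝ) * N * (((Fintype.card ι).choose (t+1) : ℝ) * q ^ (t+1)) := by
      calc (t + 1 : ℝ) * N * (∑ S ∈ powersetCard (t+1) (univ : Finset ι), ∏ j ∈ S, y j)
          ≤ (N - t) * (∑ i, y i) * (∑ S ∈ powersetCard t (univ : Finset ι), ∏ j ∈ S, y j) :=
            hmain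
        _ ≤ (N - t) * (∑ i, y i) * (((Fintype.card ι).choose t : ℝ) * q ^ t) := by
            apply mul_le_mul_of_nonneg_left IH
            exact mul_nonneg hNt hsum0
        _ = (t + 1 : ℝ) * N * (((Fintype.card ι).choose (t+1) : ℝ) * q ^ (t+1)) := by
            rw [hp1]
            linear_combination (-(N * q ^ (t+1))) * hch
    have hpos : (0:ℝ) < (t + 1 : ℝ) * N := by positivity
    exact le_of_mul_le_mul_left step hpos

open scoped Classical in
lemma key (x : ι → ℝ) (hx : ∀ i, |x i| ≤ 1) (t : ℕ) (ht : 1 ≤ t)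
    (htn : t ≤ Fintype.card ι) (s : ℝ) (hs0 : 0 ≤ s) (hs1 : s ≤ 1) :
    ((((powersetCard t (univ : Finset ι)).filter
        (fun S => (∑ i, x i) / (Fintype.card ι : ℝ) + s ≤ (∑ i ∈ S, x i) / (t : ℝ))).card : ℝ))
      ≤ Real.exp (-(t * s^2) / 4) * ((Fintype.card ι).choose t : ℝ) := by
  have hn : 1 ≤ Fintype.card ι := le_trans ht htn
  have hN0 : (0:ℝ) < (Fintype.card ι : ℝ) := by exact_mod_cast hn
  have ht0 : (0:ℝ) < (t : ℝ) := by exact_mod_cast ht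
  set μ := (∑ i, x i) / (Fintype.card ι : ℝ) with hμ
  have hμ1 : |μ| ≤ 1 := by
    rw [hμ, abs_div, abs_of_pos hN0, div_le_one hN0]
    calc |∑ i, x i| ≤ ∑ i, |x i| := Finset.abs_sum_le_sum_abs _ _
      _ ≤ ∑ _i : ι, (1:ℝ) := Finset.sum_le_sum fun i _ => hx i
      _ = (Fintype.card ι : ℝ) := by simp
  set lam := s / 2 with hlam
  have hlam0 : 0 ≤ lam := by rw [hlam]; linarith
  set y := fun i => Real.exp (lam * (x i - μ)) with hydef
  have hy0 : ∀ i, 0 ≤ y i := fun i => (Real.exp_pos _).le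
  have habs2 : ∀ i, |x i - μ| ≤ 2 := by
    intro i
    calc |x i - μ| = |x i + -μ| := by ring_nf
      _ ≤ |x i| + |(-μ)| := abs_add_le _ _
      _ ≤ 2 := by rw [abs_neg]; linarith [hx i, hμ1]
  have hwb : ∀ i, |lam * (x i - μ)| ≤ 1 := by
    intro i
    rw [abs_mul, abs_of_nonneg hlam0]
    have h2 := habs2 i
    have : lam ≤ 1/2 := by rw [hlam]; linarith
    nlinarith [abs_nonneg (x i - μ)]
  have hexp : ∀ i, y i ≤ 1 + lam * (x i - μ) + (3/4) * (lam * (x i - μ))^2 := by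
    intro i
    have hb := Real.exp_bound (hwb i) (by norm_num : 0 < 2)
    have hsum2 : ∑ m ∈ Finset.range 2, (lam * (x i - μ))^m / (m.factorial : ℝ)
        = 1 + lam * (x i - μ) := by
      simp [Finset.sum_range_succ]
    rw [hsum2] at hb
    have hb2 := (abs_le.1 hb).2
    rw [sq_abs] at hb2
    norm_num [Nat.factorial] at hb2
    linarith
  have hsumw : ∑ i, (x i - μ) = 0 := by
    rw [Finset.sum_sub_distrib, Finset.sum_const, Finset.card_univ, nsmul_eq_mul, hμ]
    field_simp
    ring
  have hsumx : ∑ i, x i = (Fintype.card ι : ℝ) * μ := by rw [hμ]; field_simp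
  have hsumw2 : ∑ i, (x i - μ)^2 ≤ (Fintype.card ι : ℝ) := by
    have hexpand : ∑ i, (x i - μ)^2
        = (∑ i, (x i)^2) - (Fintype.card ι : ℝ) * μ^2 := by
      have hc : ∀ i ∈ (univ : Finset ι), (x i - μ)^2 = ((x i)^2 - 2*μ*(x i)) + μ^2 :=
        fun i _ => by ring
      rw [Finset.sum_congr rfl hc, Finset.sum_add_distrib, Finset.sum_sub_distrib,
        Finset.sum_const, Finset.card_univ, nsmul_eq_mul, ← Finset.mul_sum, hsumx]
      ring
    have hx2 : ∑ i, (x i)^2 ≤ (Fintype.card ι : ℝ) := by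
      calc ∑ i, (x i)^2 ≤ ∑ _i : ι, (1:ℝ) := by
            refine Finset.sum_le_sum fun i _ => ?_
            have := abs_le.1 (hx i)
            nlinarith
        _ = (Fintype.card ι : ℝ) := by simp
    nlinarith [sq_nonneg μ]
  have hybar : ∑ i, y i ≤ (Fintype.card ι : ℝ) * (1 + lam^2) := by
    have h1 : ∑ i, y i ≤ ∑ i, (1 + lam * (x i - μ) + (3/4) * (lam * (x i - μ))^2) :=
      Finset.sum_le_sum fun i _ => hexp i
    have h2 : ∑ i, (1 + lam * (x i - μ) + (3/4) * (lam * (x i - μ))^2)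
        = (Fintype.card ι : ℝ) + lam * (∑ i, (x i - μ))
          + (3/4) * lam^2 * (∑ i, (x i - μ)^2) := by
      have hc : ∀ i ∈ (univ : Finset ι),
          1 + lam * (x i - μ) + (3/4) * (lam * (x i - μ))^2
            = 1 + lam * (x i - μ) + (3/4) * lam^2 * ((x i - μ)^2) := fun i _ => by ring
      rw [Finset.sum_congr rfl hc, Finset.sum_add_distrib, Finset.sum_add_distrib,
        Finset.sum_const, Finset.card_univ, nsmul_eq_mul, mul_one, ← Finset.mul_sum,
        ← Finset.mul_sum]
    rw [h2, hsumw] at h1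
    nlinarith [h1, mul_le_mul_of_nonneg_left hsumw2
      (by positivity : (0:ℝ) ≤ (3/4) * lam^2)]
  have hq0 : (0:ℝ) ≤ (∑ i, y i) / (Fintype.card ι : ℝ) :=
    div_nonneg (Finset.sum_nonneg fun i _ => hy0 i) hN0.le
  have hq : (∑ i, y i) / (Fintype.card ι : ℝ) ≤ Real.exp (lam^2) := by
    rw [div_le_iff₀ hN0]
    calc ∑ i, y i ≤ (Fintype.card ι : ℝ) * (1 + lam^2) := hybar
      _ ≤ (Fintype.card ι : ℝ) * Real.exp (lam^2) := by
          have := Real.add_one_le_exp (lam^2)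
          exact mul_le_mul_of_nonneg_left (by linarith) hN0.le
      _ = Real.exp (lam^2) * (Fintype.card ι : ℝ) := by ring
  have hqpow : ((∑ i, y i) / (Fintype.card ι : ℝ))^t ≤ Real.exp (t * lam^2) := by
    calc ((∑ i, y i) / (Fintype.card ι : ℝ))^t ≤ (Real.exp (lam^2))^t :=
          pow_le_pow_left₀ hq0 hq t
      _ = Real.exp (t * lam^2) := by rw [← Real.exp_nat_mul]
  have hlow : ∀ S ∈ (powersetCard t (univ : Finset ι)).filter
      (fun S => (∑ i, x i) / (Fintype.card ι : ℝ) + s ≤ (∑ i ∈ S, x i) / (t : ℝ)),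
      Real.exp (lam * ((t:ℝ) * s)) ≤ ∏ i ∈ S, y i := by
    intro S hS
    rw [Finset.mem_filter] at hS
    have hcard : S.card = t := mem_powersetCard_univ.1 hS.1
    have hsum : (t:ℝ) * (μ + s) ≤ ∑ i ∈ S, x i := by
      have h := hS.2
      rw [le_div_iff₀ ht0] at h
      rw [← hμ] at h
      linarith
    have hw : (t:ℝ) * s ≤ ∑ i ∈ S, (x i - μ) := by
      rw [Finset.sum_sub_distrib, Finset.sum_const, hcard, nsmul_eq_mul]
      linarith
    have hmono : lam * ((t:ℝ) * s) ≤ ∑ i ∈ S, lam * (x i - μ) := by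
      rw [← Finset.mul_sum]
      exact mul_le_mul_of_nonneg_left hw hlam0
    calc Real.exp (lam * ((t:ℝ) * s)) ≤ Real.exp (∑ i ∈ S, lam * (x i - μ)) :=
          Real.exp_le_exp.2 hmono
      _ = ∏ i ∈ S, y i := Real.exp_sum _ _
  set F := (powersetCard t (univ : Finset ι)).filter
      (fun S => (∑ i, x i) / (Fintype.card ι : ℝ) + s ≤ (∑ i ∈ S, x i) / (t : ℝ)) with hF
  have hcount : (F.card : ℝ) * Real.exp (lam * ((t:ℝ) * s))
      ≤ ∑ S ∈ powersetCard t (univ : Finset ι), ∏ i ∈ S, y i := by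
    calc (F.card : ℝ) * Real.exp (lam * ((t:ℝ) * s))
        = ∑ _S ∈ F, Real.exp (lam * ((t:ℝ) * s)) := by
          rw [Finset.sum_const, nsmul_eq_mul]
      _ ≤ ∑ S ∈ F, ∏ i ∈ S, y i := Finset.sum_le_sum hlow
      _ ≤ ∑ S ∈ powersetCard t (univ : Finset ι), ∏ i ∈ S, y i :=
          Finset.sum_le_sum_of_subset_of_nonneg (Finset.filter_subset _ _)
            (fun S _ _ => Finset.prod_nonneg fun j _ => hy0 j)
  have hmac := maclaurin t y hy0 htn hn
  have hchain : (F.card : ℝ) * Real.exp (lam * ((t:ℝ) * s))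
      ≤ ((Fintype.card ι).choose t : ℝ) * Real.exp ((t:ℝ) * lam^2) := by
    calc (F.card : ℝ) * Real.exp (lam * ((t:ℝ) * s))
        ≤ ∑ S ∈ powersetCard t (univ : Finset ι), ∏ i ∈ S, y i := hcount
      _ ≤ ((Fintype.card ι).choose t : ℝ) * ((∑ i, y i) / (Fintype.card ι : ℝ))^t := hmac
      _ ≤ ((Fintype.card ι).choose t : ℝ) * Real.exp ((t:ℝ) * lam^2) :=
          mul_le_mul_of_nonneg_left hqpow (Nat.cast_nonneg _)
  have hEpos : (0:ℝ) < Real.exp (lam * ((t:ℝ) * s)) := Real.exp_pos _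
  have hfinal : (F.card : ℝ)
      ≤ ((Fintype.card ι).choose t : ℝ) * Real.exp ((t:ℝ) * lam^2)
          / Real.exp (lam * ((t:ℝ) * s)) := by
    rw [le_div_iff₀ hEpos]
    exact hchain
  calc (F.card : ℝ)
      ≤ ((Fintype.card ι).choose t : ℝ) * Real.exp ((t:ℝ) * lam^2)
          / Real.exp (lam * ((t:ℝ) * s)) := hfinal
    _ = ((Fintype.card ι).choose t : ℝ)
          * Real.exp ((t:ℝ) * lam^2 - lam * ((t:ℝ) * s)) := by
        rw [Real.exp_sub]; ring
    _ = Real.exp (-((t:ℝ) * s^2) / 4) * ((Fintype.card ι).choose t : ℝ) := by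
        have harg : (t:ℝ) * lam^2 - lam * ((t:ℝ) * s) = -((t:ℝ) * s^2) / 4 := by
          rw [hlam]; ring
        rw [harg]; ring

end DiscHelper

/-- The `M`-discrepancy of the multiset of integers `{z i : i ∈ s}` (with multiplicity):
the maximum over `k = 1, …, M-1` of `|(1/|s|) ∑_{i ∈ s} e^{2πi·k·z i/M}|`. -/
noncomputable def discM (M : ℕ) {ι : Type*} (s : Finset ι) (z : ι → ℤ) : ℝ :=
  sSup {d : ℝ | ∃ k : ℕ, 1 ≤ k ∧ k ≤ M - 1 ∧
    d = ‖(∑ i ∈ s, Complex.exp (2 * Real.pi * Complex.I * k * (z i) / M)) /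
          (s.card : ℂ)‖}

open Finset in
set_option maxHeartbeats 3200000 in
/-- Lemma 3.5 of the paper: discrepancy under sampling without replacement.  The number of
`t`-element subsets `S` on which the discrepancy of the sub-multiset exceeds that of the
whole multiset by at least `α` is at most a `4M·exp(-tα²/8)` fraction of all `t`-subsets. -/
theorem discrepancy_sampling_without_replacement (n t M : ℕ)
    (ht : 1 ≤ t) (htn : t ≤ n) (hM : 2 ≤ M)
    (z : Fin n → ℤ) (α : ℝ) (hα : α ∈ Set.Icc (0 : ℝ) 1) :
    (Nat.card {S : Finset (Fin n) // S.card = t ∧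
        α ≤ discM M S z - discM M Finset.univ z} : ℝ) ≤
      4 * M * Real.exp (-(t * α ^ 2) / 8) * (n.choose t : ℝ) := by
  classical
  obtain ⟨hα0, hα1⟩ := hα
  have hn : 1 ≤ n := le_trans ht htn
  set c : ℕ → Fin n → ℂ := fun k i => Complex.exp (2 * Real.pi * Complex.I * k * (z i) / M)
    with hc
  set f : ℕ → Finset (Fin n) → ℝ := fun k S =>
    ‖(∑ i ∈ S, c k i) / (S.card : ℂ)‖ with hf
  have hdisc : ∀ S : Finset (Fin n),
      discM M S z = sSup {d : ℝ | ∃ k : ℕ, 1 ≤ k ∧ k ≤ M - 1 ∧ d = f k S} := fun S => rfl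
  have hDset : ∀ S : Finset (Fin n), {d : ℝ | ∃ k : ℕ, 1 ≤ k ∧ k ≤ M - 1 ∧ d = f k S}
      = ↑((Finset.Icc 1 (M-1)).image (fun k => f k S)) := by
    intro S
    ext d
    simp only [Set.mem_setOf_eq, coe_image, Set.mem_image, mem_coe, mem_Icc]
    constructor
    · rintro ⟨k, h1, h2, rfl⟩; exact ⟨k, ⟨h1, h2⟩, rfl⟩
    · rintro ⟨k, ⟨h1, h2⟩, rfl⟩; exact ⟨k, h1, h2, rfl⟩
  have hIccne : (Finset.Icc 1 (M-1)).Nonempty := ⟨1, by rw [mem_Icc]; omega⟩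
  have hmem : ∀ S : Finset (Fin n),
      discM M S z ∈ ((Finset.Icc 1 (M-1)).image (fun k => f k S)) := by
    intro S
    have h := Finset.Nonempty.csSup_mem (hIccne.image (fun k => f k S))
    rw [hdisc S, hDset S]
    exact h
  have hle : ∀ k, 1 ≤ k → k ≤ M - 1 → f k Finset.univ ≤ discM M Finset.univ z := by
    intro k h1 h2
    rw [hdisc Finset.univ, hDset Finset.univ]
    apply le_csSup (Finset.bddAbove _)
    simp only [coe_image, Set.mem_image, mem_coe, mem_Icc]
    exact ⟨k, ⟨h1, h2⟩, rfl⟩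
  have habs1 : ∀ k (i : Fin n), ‖c k i‖ = 1 := by
    intro k i
    have harg : 2 * (Real.pi:ℂ) * Complex.I * (k:ℂ) * ((z i : ℤ):ℂ) / (M:ℂ)
        = (((2 * Real.pi * k * (z i)) / M : ℝ) : ℂ) * Complex.I := by
      push_cast
      ring
    rw [hc]
    simp only []
    rw [harg, Complex.norm_exp_ofReal_mul_I]
  -- the deviation parameter
  set s : ℝ := α / Real.sqrt 2 with hs
  have hsqrt2 : (1:ℝ) ≤ Real.sqrt 2 := by
    rw [show (1:ℝ) = Real.sqrt 1 by rw [Real.sqrt_one]]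
    exact Real.sqrt_le_sqrt (by norm_num)
  have hsqrt2pos : (0:ℝ) < Real.sqrt 2 := lt_of_lt_of_le one_pos hsqrt2
  have hs0 : 0 ≤ s := div_nonneg hα0 hsqrt2pos.le
  have hs1 : s ≤ 1 := by
    rw [hs, div_le_one hsqrt2pos]
    linarith
  have hs2 : s^2 = α^2 / 2 := by
    rw [hs, div_pow, Real.sq_sqrt (by norm_num : (0:ℝ) ≤ 2)]
  -- events
  set E : (Fin n → ℝ) → Finset (Finset (Fin n)) := fun x =>
    (powersetCard t (univ : Finset (Fin n))).filter
      (fun S => (∑ i, x i) / (n : ℝ) + s ≤ (∑ i ∈ S, x i) / (t : ℝ))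
    with hE
  have hkey : ∀ x : Fin n → ℝ, (∀ i, |x i| ≤ 1) →
      ((E x).card : ℝ) ≤ Real.exp (-((t:ℝ) * α^2)/8) * (n.choose t : ℝ) := by
    intro x hx
    have h := DiscHelper.key x hx t ht (by rw [Fintype.card_fin]; exact htn) s hs0 hs1
    rw [Fintype.card_fin] at h
    have harg2 : -((t:ℝ) * s^2)/4 = -((t:ℝ) * α^2)/8 := by rw [hs2]; ring
    rw [harg2] at h
    exact h
  set bad := Finset.univ.filter
    (fun S : Finset (Fin n) => S.card = t ∧ α ≤ discM M S z - discM M Finset.univ z) with hbad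
  have hNatcard : (Nat.card {S : Finset (Fin n) // S.card = t ∧
      α ≤ discM M S z - discM M Finset.univ z}) = bad.card := by
    rw [Nat.card_eq_fintype_card, Fintype.card_subtype]
  set g : ℕ → Finset (Finset (Fin n)) := fun k =>
    E (fun i => (c k i).re) ∪ E (fun i => -(c k i).re)
      ∪ E (fun i => (c k i).im) ∪ E (fun i => -(c k i).im) with hg
  have hsubset : bad ⊆ (Finset.Icc 1 (M-1)).biUnion g := by
    intro S hS
    rw [hbad, Finset.mem_filter] at hS
    obtain ⟨-, hcardS, hαS⟩ := hS
    have hmemS := hmem S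
    rw [Finset.mem_image] at hmemS
    obtain ⟨k, hk, hfk⟩ := hmemS
    rw [Finset.mem_Icc] at hk
    have hfle := hle k hk.1 hk.2
    have hdev : α ≤ f k S - f k Finset.univ := by
      rw [← hfk] at hαS
      linarith
    set A := (∑ i ∈ S, c k i) / (S.card : ℂ) with hA
    set B := (∑ i ∈ (univ : Finset (Fin n)), c k i) / ((univ : Finset (Fin n)).card : ℂ) with hB
    have hAB : α ≤ ‖A - B‖ := by
      have h3 := norm_sub_norm_le A B
      have h1 : f k S = ‖A‖ := rfl
      have h2 : f k Finset.univ = ‖B‖ := rfl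
      rw [h1, h2] at hdev
      linarith
    have hsq : α^2 ≤ (A-B).re^2 + (A-B).im^2 := by
      have h3 : (‖A-B‖)^2 = (A-B).re^2 + (A-B).im^2 := by
        rw [Complex.sq_norm, Complex.normSq_apply]
        ring
      nlinarith [hAB, hα0]
    have hcast : ∀ (w : ℂ) (m : ℕ), (w / (m:ℂ)).re = w.re / (m:ℝ) := by
      intro w m
      rw [show ((m:ℕ):ℂ) = ((m:ℝ):ℂ) by push_cast; rfl, Complex.div_ofReal_re]
    have hcastim : ∀ (w : ℂ) (m : ℕ), (w / (m:ℂ)).im = w.im / (m:ℝ) := by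
      intro w m
      rw [show ((m:ℕ):ℂ) = ((m:ℝ):ℂ) by push_cast; rfl, Complex.div_ofReal_im]
    have hre : (A - B).re
        = (∑ i ∈ S, (c k i).re) / (t:ℝ)
          - (∑ i, (c k i).re) / (n : ℝ) := by
      rw [Complex.sub_re, hA, hB, hcast, hcast, Complex.re_sum, Complex.re_sum,
        hcardS, Finset.card_univ, Fintype.card_fin]
    have him : (A - B).im
        = (∑ i ∈ S, (c k i).im) / (t:ℝ)
          - (∑ i, (c k i).im) / (n : ℝ) := by
      rw [Complex.sub_im, hA, hB, hcastim, hcastim, Complex.im_sum, Complex.im_sum,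
        hcardS, Finset.card_univ, Fintype.card_fin]
    have hSmem : S ∈ powersetCard t (univ : Finset (Fin n)) := mem_powersetCard_univ.2 hcardS
    have hmemE : ∀ (x : Fin n → ℝ),
        s ≤ (∑ i ∈ S, x i) / (t:ℝ) - (∑ i, x i) / (n : ℝ) → S ∈ E x := by
      intro x hcond
      rw [hE]
      rw [Finset.mem_filter]
      exact ⟨hSmem, by linarith⟩
    have hneg : ∀ (x : Fin n → ℝ),
        (∑ i ∈ S, (fun i => -x i) i) / (t:ℝ)
            - (∑ i, (fun i => -x i) i) / (n : ℝ)
          = -((∑ i ∈ S, x i) / (t:ℝ) - (∑ i, x i) / (n : ℝ)) := by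
      intro x
      simp only [Finset.sum_neg_distrib, neg_div]
      ring
    have hcase : s^2 ≤ (A-B).re^2 ∨ s^2 ≤ (A-B).im^2 := by
      by_contra hcon
      push_neg at hcon
      rw [hs2] at hcon
      nlinarith [hcon.1, hcon.2, hsq]
    have habs_ge : ∀ r : ℝ, s^2 ≤ r^2 → s ≤ r ∨ s ≤ -r := by
      intro r hr
      rcases le_or_gt 0 r with h | h
      · left
        nlinarith
      · right
        nlinarith
    rw [Finset.mem_biUnion]
    refine ⟨k, Finset.mem_Icc.2 hk, ?_⟩
    rw [hg]
    rcases hcase with hca | hca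
    · rcases habs_ge _ hca with hr | hr
      · have := hmemE (fun i => (c k i).re) (by rw [← hre]; linarith)
        simp only [Finset.mem_union]
        tauto
      · have := hmemE (fun i => -(c k i).re) (by rw [hneg, ← hre]; linarith)
        simp only [Finset.mem_union]
        tauto
    · rcases habs_ge _ hca with hr | hr
      · have := hmemE (fun i => (c k i).im) (by rw [← him]; linarith)
        simp only [Finset.mem_union]
        tauto
      · have := hmemE (fun i => -(c k i).im) (by rw [hneg, ← him]; linarith)
        simp only [Finset.mem_union]
        tauto
  -- counting
  have hx4 : ∀ k, ((g k).card : ℝ)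
      ≤ 4 * (Real.exp (-((t:ℝ) * α^2)/8) * (n.choose t : ℝ)) := by
    intro k
    have hb1 : ∀ i, |(c k i).re| ≤ 1 := fun i => by
      rw [← habs1 k i]; exact Complex.abs_re_le_norm _
    have hb2 : ∀ i, |(-(c k i).re)| ≤ 1 := fun i => by rw [abs_neg]; exact hb1 i
    have hb3 : ∀ i, |(c k i).im| ≤ 1 := fun i => by
      rw [← habs1 k i]; exact Complex.abs_im_le_norm _
    have hb4 : ∀ i, |(-(c k i).im)| ≤ 1 := fun i => by rw [abs_neg]; exact hb3 i
    have h1 := hkey _ hb1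
    have h2 := hkey _ hb2
    have h3 := hkey _ hb3
    have h4 := hkey _ hb4
    have hcard : (g k).card ≤ (E (fun i => (c k i).re)).card + (E (fun i => -(c k i).re)).card
        + (E (fun i => (c k i).im)).card + (E (fun i => -(c k i).im)).card := by
      rw [hg]
      calc (E (fun i => (c k i).re) ∪ E (fun i => -(c k i).re)
            ∪ E (fun i => (c k i).im) ∪ E (fun i => -(c k i).im)).card
          ≤ (E (fun i => (c k i).re) ∪ E (fun i => -(c k i).re)
              ∪ E (fun i => (c k i).im)).card + (E (fun i => -(c k i).im)).card :=
            Finset.card_union_le _ _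
        _ ≤ (E (fun i => (c k i).re) ∪ E (fun i => -(c k i).re)).card
              + (E (fun i => (c k i).im)).card + (E (fun i => -(c k i).im)).card := by
            have := Finset.card_union_le (E (fun i => (c k i).re) ∪ E (fun i => -(c k i).re))
              (E (fun i => (c k i).im))
            omega
        _ ≤ (E (fun i => (c k i).re)).card + (E (fun i => -(c k i).re)).card
              + (E (fun i => (c k i).im)).card + (E (fun i => -(c k i).im)).card := by
            have := Finset.card_union_le (E (fun i => (c k i).re)) (E (fun i => -(c k i).re))
            omega
    have hcardR : ((g k).card : ℝ) ≤ ((E (fun i => (c k i).re)).card : ℝ)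
        + ((E (fun i => -(c k i).re)).card : ℝ) + ((E (fun i => (c k i).im)).card : ℝ)
        + ((E (fun i => -(c k i).im)).card : ℝ) := by
      exact_mod_cast hcard
    linarith
  have hcount1 : (bad.card : ℝ) ≤ ∑ k ∈ Finset.Icc 1 (M-1), ((g k).card : ℝ) := by
    have h := le_trans (Finset.card_le_card hsubset) (Finset.card_biUnion_le)
    calc (bad.card : ℝ) ≤ ((∑ k ∈ Finset.Icc 1 (M-1), (g k).card : ℕ) : ℝ) := by
          exact_mod_cast h
      _ = ∑ k ∈ Finset.Icc 1 (M-1), ((g k).card : ℝ) := by push_cast; rfl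
  have hcount2 : (bad.card : ℝ)
      ≤ ((M:ℝ) - 1) * (4 * (Real.exp (-((t:ℝ) * α^2)/8) * (n.choose t : ℝ))) := by
    calc (bad.card : ℝ) ≤ ∑ k ∈ Finset.Icc 1 (M-1), ((g k).card : ℝ) := hcount1
      _ ≤ ∑ _k ∈ Finset.Icc 1 (M-1),
            4 * (Real.exp (-((t:ℝ) * α^2)/8) * (n.choose t : ℝ)) :=
          Finset.sum_le_sum fun k _ => hx4 k
      _ = ((M:ℝ) - 1) * (4 * (Real.exp (-((t:ℝ) * α^2)/8) * (n.choose t : ℝ))) := by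
          rw [Finset.sum_const, nsmul_eq_mul, Nat.card_Icc]
          congr 1
          have : M - 1 + 1 - 1 = M - 1 := by omega
          rw [this]
          push_cast [Nat.cast_sub (by omega : 1 ≤ M)]
          ring
  rw [hNatcard]
  have hpos : (0:ℝ) ≤ 4 * (Real.exp (-((t:ℝ) * α^2)/8) * (n.choose t : ℝ)) := by positivity
  have hM1 : ((M:ℝ) - 1) ≤ (M:ℝ) := by linarith
  calc (bad.card : ℝ)
      ≤ ((M:ℝ) - 1) * (4 * (Real.exp (-((t:ℝ) * α^2)/8) * (n.choose t : ℝ))) := hcount2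
    _ ≤ (M:ℝ) * (4 * (Real.exp (-((t:ℝ) * α^2)/8) * (n.choose t : ℝ))) :=
        mul_le_mul_of_nonneg_right hM1 hpos
    _ = 4 * M * Real.exp (-((t:ℝ) * α ^ 2) / 8) * (n.choose t : ℝ) := by ring
end

section
/- There is a constant C* ≥ 1 such that for all integers M ≥ 2 and t ≥ 2 there is a nonempty set S ⊆ {1, 2, …, M} with |S| ≤ t and disc_M(S) ≤ C*·(log t / t^{1/4}) · (log M / (1 + log log M)). -/
open Finset


lemma aux_pow_ineq : ∀ q : ℕ, (q+1) * 4^q ≤ 9^q := by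
  intro q
  induction q with
  | zero => norm_num
  | succ n ih =>
    calc (n+1+1) * 4^(n+1) ≤ (2*(n+1)) * 4^(n+1) := Nat.mul_le_mul_right _ (by omega)
      _ = 8 * ((n+1) * 4^n) := by ring
      _ ≤ 8 * 9^n := Nat.mul_le_mul_left 8 ih
      _ ≤ 9 * 9^n := Nat.mul_le_mul_right _ (by omega)
      _ = 9^(n+1) := by ring

-- fiber count
lemma fiber_sum {q t' : ℕ} (f : Fin q → Fin t') :
    ∑ i : Fin t', #(univ.filter (fun j => f j = i)) = q := by
  have := Finset.card_eq_sum_card_fiberwise (f := f) (s := univ) (t := univ)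
    (fun x _ => mem_univ _)
  simpa using this.symm

-- number of "bad" pairs
lemma count_bad (q t' : ℕ) (ht' : 1 ≤ t') :
    #((univ : Finset ((Fin q → Fin t') × (Fin q → Fin t'))).filter
      (fun fg => ∀ i : Fin t',
        #(univ.filter (fun j => fg.1 j = i)) + #(univ.filter (fun j => fg.2 j = i)) ≠ 1))
    ≤ (q+1) * (q^(2*q) * t'^q) := by
  classical
  set Bad := (univ : Finset ((Fin q → Fin t') × (Fin q → Fin t'))).filter
      (fun fg => ∀ i : Fin t',
        #(univ.filter (fun j => fg.1 j = i)) + #(univ.filter (fun j => fg.2 j = i)) ≠ 1) with hBad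
  have hsub : Bad ⊆ (range (q+1)).biUnion (fun j =>
      ((univ : Finset (Fin t')).powersetCard j).biUnion (fun s =>
        (Fintype.piFinset (fun _ : Fin q => s)) ×ˢ (Fintype.piFinset (fun _ : Fin q => s)))) := by
    intro fg hfg
    rw [hBad, mem_filter] at hfg
    obtain ⟨-, hcond⟩ := hfg
    set s : Finset (Fin t') := (image fg.1 univ) ∪ (image fg.2 univ) with hs
    have hcard : 2 * #s ≤ 2 * q := by
      have h1 : ∀ i ∈ s, 2 ≤ #(univ.filter (fun j => fg.1 j = i)) + #(univ.filter (fun j => fg.2 j = i)) := by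
        intro i hi
        have hpos : 1 ≤ #(univ.filter (fun j => fg.1 j = i)) + #(univ.filter (fun j => fg.2 j = i)) := by
          rw [hs, mem_union] at hi
          rcases hi with hi | hi
          · obtain ⟨j, -, hj⟩ := mem_image.mp hi
            have : j ∈ univ.filter (fun j => fg.1 j = i) := by simp [hj]
            have := card_pos.mpr ⟨j, this⟩
            omega
          · obtain ⟨j, -, hj⟩ := mem_image.mp hi
            have : j ∈ univ.filter (fun j => fg.2 j = i) := by simp [hj]
            have := card_pos.mpr ⟨j, this⟩
            omega
        have := hcond i
        omega
      calc 2 * #s = ∑ _i ∈ s, 2 := by simp [mul_comm]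
        _ ≤ ∑ i ∈ s, (#(univ.filter (fun j => fg.1 j = i)) + #(univ.filter (fun j => fg.2 j = i))) :=
            Finset.sum_le_sum h1
        _ ≤ ∑ i : Fin t', (#(univ.filter (fun j => fg.1 j = i)) + #(univ.filter (fun j => fg.2 j = i))) :=
            Finset.sum_le_sum_of_subset (subset_univ _)
        _ = 2 * q := by rw [Finset.sum_add_distrib, fiber_sum, fiber_sum]; ring
    have hcardq : #s ≤ q := by omega
    rw [mem_biUnion]
    refine ⟨#s, by simp [Nat.lt_succ_iff, hcardq], ?_⟩
    rw [mem_biUnion]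
    refine ⟨s, by simp [mem_powersetCard, subset_univ], ?_⟩
    rw [mem_product]
    constructor
    · rw [Fintype.mem_piFinset]
      intro j
      rw [hs, mem_union]
      exact Or.inl (mem_image.mpr ⟨j, mem_univ _, rfl⟩)
    · rw [Fintype.mem_piFinset]
      intro j
      rw [hs, mem_union]
      exact Or.inr (mem_image.mpr ⟨j, mem_univ _, rfl⟩)
  calc #Bad ≤ _ := card_le_card hsub
    _ ≤ ∑ j ∈ range (q+1), #(((univ : Finset (Fin t')).powersetCard j).biUnion (fun s =>
        (Fintype.piFinset (fun _ : Fin q => s)) ×ˢ (Fintype.piFinset (fun _ : Fin q => s)))) :=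
        card_biUnion_le
    _ ≤ ∑ j ∈ range (q+1), ∑ s ∈ (univ : Finset (Fin t')).powersetCard j,
          #((Fintype.piFinset (fun _ : Fin q => s)) ×ˢ (Fintype.piFinset (fun _ : Fin q => s))) :=
        Finset.sum_le_sum (fun j _ => card_biUnion_le)
    _ ≤ ∑ j ∈ range (q+1), ∑ s ∈ (univ : Finset (Fin t')).powersetCard j, q^(2*q) := by
        refine Finset.sum_le_sum (fun j hj => Finset.sum_le_sum (fun s hs => ?_))
        rw [card_product, Fintype.card_piFinset]
        simp only [prod_const, card_univ, Fintype.card_fin]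
        rw [mem_powersetCard] at hs
        have hsq : #s ≤ q := by
          rw [hs.2]; rw [mem_range] at hj; omega
        have h1 : #s ^ q * #s ^ q ≤ q ^ q * q ^ q :=
          Nat.mul_le_mul (Nat.pow_le_pow_left hsq q) (Nat.pow_le_pow_left hsq q)
        have h2 : (q:ℕ) ^ q * q ^ q = q ^ (2*q) := by rw [← pow_add]; ring_nf
        omega
    _ ≤ ∑ j ∈ range (q+1), q^(2*q) * t'^q := by
        refine Finset.sum_le_sum (fun j hj => ?_)
        rw [Finset.sum_const, card_powersetCard, card_univ, Fintype.card_fin, smul_eq_mul]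
        rw [mul_comm]
        refine Nat.mul_le_mul_left _ ?_
        calc t'.choose j ≤ t' ^ j := Nat.choose_le_pow _ _
          _ ≤ t' ^ q := Nat.pow_le_pow_right ht' (by rw [mem_range] at hj; omega)
    _ = (q+1) * (q^(2*q) * t'^q) := by
        rw [Finset.sum_const, card_range, smul_eq_mul]


lemma prod_eq_pow_fiber {q t' : ℕ} (h : Fin t' → ℂ) (f : Fin q → Fin t') :
    ∏ j, h (f j) = ∏ i : Fin t', h i ^ #(univ.filter fun j => f j = i) := by
  classical
  rw [Finset.prod_comp]
  refine Finset.prod_subset (subset_univ _) (fun i _ hi => ?_)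
  have : #(univ.filter fun j => f j = i) = 0 := by
    rw [Finset.card_eq_zero, Finset.filter_eq_empty_iff]
    intro j _
    intro hj
    exact hi (mem_image.mpr ⟨j, mem_univ _, hj⟩)
  rw [this, pow_zero]

lemma moment_bound {q t' m : ℕ} (ht' : 1 ≤ t') (hm : 1 ≤ m)
    (Y : Fin t' → Fin m → ℂ) (hY0 : ∀ i, ∑ c, Y i c = 0)
    (hYb : ∀ i c, ‖Y i c‖ ≤ 2) :
    ∑ σ : Fin t' → Fin m, (Complex.normSq (∑ i, Y i (σ i)))^q
      ≤ ((q+1) * (q^(2*q) * t'^q) : ℕ) * ((m:ℝ)^t' * 4^q) := by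
  classical
  set W : (Fin t' → Fin m) → ℂ := fun σ => ∑ i, Y i (σ i) with hW
  -- expansion of powers
  have hexp : ∀ σ, (W σ)^q = ∑ f : Fin q → Fin t', ∏ j, Y (f j) (σ (f j)) := by
    intro σ
    have h1 : (W σ)^q = ∏ _j : Fin q, W σ := by
      rw [prod_const, card_univ, Fintype.card_fin]
    rw [h1, hW]
    simp only
    rw [Finset.prod_univ_sum (fun _ => univ) (fun _ i => Y i (σ i))]
    rw [Fintype.piFinset_univ]
  have hexpc : ∀ σ, (starRingEnd ℂ) ((W σ)^q)
      = ∑ g : Fin q → Fin t', ∏ j, (starRingEnd ℂ) (Y (g j) (σ (g j))) := by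
    intro σ
    rw [hexp, map_sum]
    exact Finset.sum_congr rfl (fun g _ => by rw [map_prod])
  -- T
  set T : ℂ := ∑ σ : Fin t' → Fin m, (W σ)^q * (starRingEnd ℂ) ((W σ)^q) with hT
  have hTre : ∑ σ : Fin t' → Fin m, (Complex.normSq (W σ))^q = T.re := by
    rw [hT]
    have : ∀ σ : Fin t' → Fin m, (W σ)^q * (starRingEnd ℂ) ((W σ)^q)
        = ((Complex.normSq (W σ) ^ q : ℝ) : ℂ) := by
      intro σ
      rw [Complex.mul_conj]
      norm_cast
      exact (map_pow Complex.normSq (W σ) q)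
    rw [Finset.sum_congr rfl (fun σ _ => this σ), ← Complex.ofReal_sum]
    rw [Complex.ofReal_re]
  -- per-pair quantities
  set a : (Fin q → Fin t') → Fin t' → ℕ := fun f i => #(univ.filter fun j => f j = i) with ha
  set Sfac : (Fin q → Fin t') → (Fin q → Fin t') → Fin t' → ℂ :=
    fun f g i => ∑ c : Fin m, (Y i c)^(a f i) * ((starRingEnd ℂ) (Y i c))^(a g i) with hSfac
  -- rewrite T
  have hTexp : T = ∑ fg : (Fin q → Fin t') × (Fin q → Fin t'), ∏ i, Sfac fg.1 fg.2 i := by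
    rw [hT]
    have h2 : ∀ σ, (W σ)^q * (starRingEnd ℂ) ((W σ)^q)
        = ∑ fg : (Fin q → Fin t') × (Fin q → Fin t'),
            (∏ j, Y (fg.1 j) (σ (fg.1 j))) * ∏ j, (starRingEnd ℂ) (Y (fg.2 j) (σ (fg.2 j))) := by
      intro σ
      rw [hexpc, hexp, Finset.sum_mul_sum, ← Finset.sum_product']
      rw [Finset.univ_product_univ]
    rw [Finset.sum_congr rfl (fun σ _ => h2 σ), Finset.sum_comm]
    refine Finset.sum_congr rfl (fun fg _ => ?_)
    have h3 : ∀ σ : Fin t' → Fin m,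
        (∏ j, Y (fg.1 j) (σ (fg.1 j))) * ∏ j, (starRingEnd ℂ) (Y (fg.2 j) (σ (fg.2 j)))
        = ∏ i, ((Y i (σ i))^(a fg.1 i) * ((starRingEnd ℂ) (Y i (σ i)))^(a fg.2 i)) := by
      intro σ
      rw [prod_eq_pow_fiber (fun i => Y i (σ i)) fg.1,
          prod_eq_pow_fiber (fun i => (starRingEnd ℂ) (Y i (σ i))) fg.2,
          ← Finset.prod_mul_distrib]
    rw [Finset.sum_congr rfl (fun σ _ => h3 σ), hSfac]
    rw [← Fintype.piFinset_univ]
    exact (Finset.prod_univ_sum (fun _ : Fin t' => (univ : Finset (Fin m)))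
      (fun i c => Y i c ^ a fg.1 i * (starRingEnd ℂ) (Y i c) ^ a fg.2 i)).symm
  -- vanishing
  have hvanish : ∀ f g : Fin q → Fin t', (∃ i, a f i + a g i = 1) → ∏ i, Sfac f g i = 0 := by
    intro f g ⟨i, hi⟩
    refine Finset.prod_eq_zero (mem_univ i) ?_
    rw [hSfac]
    simp only
    rcases Nat.eq_zero_or_pos (a f i) with h0 | h1
    · have hb : a g i = 1 := by omega
      rw [h0, hb]
      simp only [pow_zero, one_mul, pow_one]
      rw [← map_sum, hY0, map_zero]
    · have haf : a f i = 1 := by omega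
      have hb : a g i = 0 := by omega
      rw [haf, hb]
      simp only [pow_zero, mul_one, pow_one]
      exact hY0 i
  -- bound per pair
  have habs : ∀ f g : Fin q → Fin t', ‖∏ i, Sfac f g i‖
      ≤ (m:ℝ)^t' * 2^(∑ i, (a f i + a g i)) := by
    intro f g
    rw [norm_prod]
    calc ∏ i, ‖Sfac f g i‖ ≤ ∏ i : Fin t', (m:ℝ) * 2^(a f i + a g i) := by
          refine Finset.prod_le_prod (fun _ _ => norm_nonneg _) (fun i _ => ?_)
          rw [hSfac]
          simp only
          calc ‖∑ c : Fin m, (Y i c)^(a f i) * ((starRingEnd ℂ) (Y i c))^(a g i)‖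
              ≤ ∑ c : Fin m, ‖(Y i c)^(a f i) * ((starRingEnd ℂ) (Y i c))^(a g i)‖ :=
                norm_sum_le _ _
            _ ≤ ∑ _c : Fin m, (2:ℝ)^(a f i + a g i) := by
                refine Finset.sum_le_sum (fun c _ => ?_)
                rw [norm_mul, norm_pow, norm_pow, Complex.norm_conj, pow_add]
                have h2 : (0:ℝ) ≤ ‖Y i c‖ := norm_nonneg _
                exact mul_le_mul (pow_le_pow_left₀ h2 (hYb i c) _)
                  (pow_le_pow_left₀ h2 (hYb i c) _) (by positivity) (by positivity)
            _ = (m:ℝ) * 2^(a f i + a g i) := by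
                rw [Finset.sum_const, card_univ, Fintype.card_fin, nsmul_eq_mul]
      _ = (m:ℝ)^t' * 2^(∑ i, (a f i + a g i)) := by
          rw [Finset.prod_mul_distrib, Finset.prod_const, Finset.prod_pow_eq_pow_sum,
            card_univ, Fintype.card_fin]
  classical
  have hfib : ∀ f : Fin q → Fin t', ∑ i, a f i = q := by
    intro f
    have := Finset.card_eq_sum_card_fiberwise (f := f) (s := univ) (t := univ)
      (fun x _ => mem_univ _)
    rw [ha]
    simpa using this.symm
  rw [hTre]
  have hcount : #((univ : Finset ((Fin q → Fin t') × (Fin q → Fin t'))).filter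
      (fun fg => ∀ i : Fin t', a fg.1 i + a fg.2 i ≠ 1)) ≤ (q+1) * (q^(2*q) * t'^q) := by
    rw [ha]
    exact count_bad q t' ht'
  calc T.re ≤ ‖T‖ := Complex.re_le_norm T
    _ = ‖∑ fg : (Fin q → Fin t') × (Fin q → Fin t'), ∏ i, Sfac fg.1 fg.2 i‖ := by
        rw [hTexp]
    _ ≤ ∑ fg : (Fin q → Fin t') × (Fin q → Fin t'), ‖∏ i, Sfac fg.1 fg.2 i‖ :=
        norm_sum_le _ _
    _ ≤ ∑ fg : (Fin q → Fin t') × (Fin q → Fin t'),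
          (if (∀ i, a fg.1 i + a fg.2 i ≠ 1) then (m:ℝ)^t' * 4^q else 0) := by
        refine Finset.sum_le_sum (fun fg _ => ?_)
        by_cases hb : ∀ i, a fg.1 i + a fg.2 i ≠ 1
        · rw [if_pos hb]
          refine (habs fg.1 fg.2).trans ?_
          have h4 : (2:ℝ)^(∑ i, (a fg.1 i + a fg.2 i)) = 4^q := by
            rw [Finset.sum_add_distrib, hfib, hfib]
            rw [show q + q = 2*q by ring, pow_mul]
            norm_num
          rw [h4]
        · rw [if_neg hb]
          push_neg at hb
          rw [hvanish fg.1 fg.2 hb, norm_zero]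
    _ = (#((univ : Finset ((Fin q → Fin t') × (Fin q → Fin t'))).filter
          (fun fg => ∀ i : Fin t', a fg.1 i + a fg.2 i ≠ 1)) : ℕ) * ((m:ℝ)^t' * 4^q) := by
        rw [← Finset.sum_filter, Finset.sum_const, nsmul_eq_mul]
    _ ≤ ((q+1) * (q^(2*q) * t'^q) : ℕ) * ((m:ℝ)^t' * 4^q) := by
        refine mul_le_mul_of_nonneg_right ?_ (by positivity)
        exact_mod_cast hcount

lemma sum_grid (F : ℕ → ℂ) (m : ℕ) (n : ℕ) :
    ∑ s ∈ range (n*m), F s = ∑ i ∈ range n, ∑ c ∈ range m, F (i*m + c) := by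
  induction n with
  | zero => simp
  | succ n ih =>
    rw [Finset.sum_range_succ, ← ih, Nat.succ_mul, Finset.range_add, Finset.sum_union, Finset.sum_map]
    · simp [addLeftEmbedding_apply]
    · simp only [Finset.disjoint_left]
      intro x hx hx2
      simp only [Finset.mem_map, Finset.mem_range, addLeftEmbedding_apply] at hx hx2
      obtain ⟨c, -, hc⟩ := hx2
      omega

lemma zeta_spec (M k : ℕ) (hM : 2 ≤ M) (hk1 : 1 ≤ k) (hkM : k < M) :
    (∀ s : ℕ, Complex.exp (2 * (Real.pi:ℂ) * Complex.I * k * s / M)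
        = Complex.exp (2 * (Real.pi:ℂ) * Complex.I * k / M) ^ s)
    ∧ ‖Complex.exp (2 * (Real.pi:ℂ) * Complex.I * k / M)‖ = 1
    ∧ ∑ s ∈ range M, Complex.exp (2 * (Real.pi:ℂ) * Complex.I * k / M) ^ s = 0 := by
  have hM0 : (M:ℂ) ≠ 0 := by
    simp only [ne_eq, Nat.cast_eq_zero]
    omega
  set ζ : ℂ := Complex.exp (2 * (Real.pi:ℂ) * Complex.I * k / M) with hζ
  have hpow : ∀ s : ℕ, Complex.exp (2 * (Real.pi:ℂ) * Complex.I * k * s / M) = ζ ^ s := by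
    intro s
    rw [hζ, ← Complex.exp_nat_mul]
    congr 1
    ring
  have habs : ‖ζ‖ = 1 := by
    rw [hζ]
    have : (2 * (Real.pi:ℂ) * Complex.I * k / M) = ((2 * Real.pi * k / M : ℝ) : ℂ) * Complex.I := by
      push_cast
      ring
    rw [this, Complex.norm_exp_ofReal_mul_I]
  have hζM : ζ ^ M = 1 := by
    rw [hζ, ← Complex.exp_nat_mul]
    have h1 : (M:ℂ) * (2 * (Real.pi:ℂ) * Complex.I * k / M) = ((k:ℤ):ℂ) * (2 * (Real.pi:ℂ) * Complex.I) := by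
      push_cast
      field_simp
    rw [h1, Complex.exp_int_mul_two_pi_mul_I]
  have hζ1 : ζ ≠ 1 := by
    intro h
    rw [hζ, Complex.exp_eq_one_iff] at h
    obtain ⟨n, hn⟩ := h
    have h2 : (2*(Real.pi:ℂ)*Complex.I) ≠ 0 := by
      simp [Real.pi_ne_zero, Complex.I_ne_zero]
    have hn' := congrArg (fun z => z * (M:ℂ)) hn
    rw [div_mul_cancel₀ _ hM0] at hn'
    have h6 : (k:ℂ) * (2*(Real.pi:ℂ)*Complex.I) = ((n:ℂ) * M) * (2*(Real.pi:ℂ)*Complex.I) := by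
      linear_combination hn'
    have h7 : (k:ℂ) = (n:ℂ) * M := mul_right_cancel₀ h2 h6
    have h8 : (k:ℤ) = n * M := by exact_mod_cast h7
    have hk2 : (k:ℤ) < M := by exact_mod_cast hkM
    have hk3 : (1:ℤ) ≤ k := by exact_mod_cast hk1
    have hM2 : (2:ℤ) ≤ M := by exact_mod_cast hM
    rcases le_or_gt n 0 with hn0 | hn0
    · nlinarith
    · nlinarith
  refine ⟨hpow, habs, ?_⟩
  rw [geom_sum_eq hζ1, hζM]
  simp

lemma case_b (M t : ℕ) (hM : 2 ≤ M) (ht : 2 ≤ t) (htM : t < M) :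
    ∃ S : Finset ℕ, S.Nonempty ∧ (∀ s ∈ S, 1 ≤ s ∧ s ≤ M) ∧ S.card ≤ t ∧
      ∀ k : ℕ, 1 ≤ k → k ≤ M - 1 →
        ‖(∑ s ∈ S, Complex.exp (2 * (Real.pi:ℂ) * Complex.I * k * (s:ℂ) / M)) / (S.card : ℂ)‖
          ≤ 14 * (Nat.clog 2 M : ℝ) / Real.sqrt t := by
  classical
  set m := (M + t - 1)/t with hm
  set t' := M/m with ht'
  set q := Nat.clog 2 M with hq
  have hm1 : 1 ≤ m := (Nat.le_div_iff_mul_le (by omega)).mpr (by omega)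
  have hmM : m ≤ M := by
    have h1 : M + t - 1 ≤ M * t := by
      zify [show (1:ℕ) ≤ M + t by omega]
      nlinarith
    have h2 : (M + t - 1)/t ≤ (M*t)/t := Nat.div_le_div_right h1
    rw [Nat.mul_comm M t, Nat.mul_div_cancel_left M (show 0 < t by omega)] at h2
    exact h2
  have ht'1 : 1 ≤ t' := (Nat.le_div_iff_mul_le (by omega)).mpr (by omega)
  have hdm1 : m * t' + M % m = M := by rw [ht']; exact Nat.div_add_mod M m
  have hdm2 := Nat.mod_lt M (show 0 < m by omega)
  have hcomm : t' * m = m * t' := Nat.mul_comm _ _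
  have ht'm : t' * m ≤ M := by rw [ht']; exact Nat.div_mul_le_self M m
  have htail : M - m * t' ≤ m - 1 := by omega
  have hmt : m * t ≤ M + t - 1 := by
    have := Nat.div_mul_le_self (M + t - 1) t
    calc m * t = (M+t-1)/t * t := by rw [hm]
      _ ≤ M + t - 1 := this
  have hmtM : M ≤ m * t := by
    have h1 := Nat.div_add_mod (M + t - 1) t
    have h2 := Nat.mod_lt (M + t - 1) (show 0 < t by omega)
    have h3 : t * ((M + t - 1)/t) = m * t := by rw [hm]; ring
    omega
  have ht't : t' ≤ t := by
    have h1 : M / m ≤ (m*t)/m := Nat.div_le_div_right hmtM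
    rwa [Nat.mul_div_cancel_left t (by omega)] at h1
  have ht4 : t ≤ 4 * t' := by
    have h1 : m * t < m * (2*t' + 2) := by
      have : m * (2*t'+2) = 2*(m*t') + 2*m := by ring
      omega
    have h2 : t < 2*t' + 2 := Nat.lt_of_mul_lt_mul_left h1
    omega
  have hq1 : 1 ≤ q := by
    by_contra h
    have hq0 : q = 0 := by omega
    have := Nat.le_pow_clog (show 1 < 2 by norm_num) M
    rw [← hq, hq0] at this
    simp at this
    omega
  have hM4 : M ≤ 4^q := by
    calc M ≤ 2^q := Nat.le_pow_clog (by norm_num) M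
      _ ≤ 4^q := Nat.pow_le_pow_left (by norm_num) q
  haveI : NeZero m := ⟨by omega⟩
  haveI : NeZero t' := ⟨by omega⟩
  have hmC : (m:ℂ) ≠ 0 := by simp only [ne_eq, Nat.cast_eq_zero]; omega
  -- the random variables
  set zk : ℕ → ℂ := fun k => Complex.exp (2 * (Real.pi:ℂ) * Complex.I * k / M) with hzk
  set μ : ℕ → Fin t' → ℂ := fun k i => (m:ℂ)⁻¹ * ∑ c : Fin m, zk k ^ ((i:ℕ)*m + (c:ℕ) + 1) with hμ
  set Y : ℕ → Fin t' → Fin m → ℂ := fun k i c => zk k ^ ((i:ℕ)*m + (c:ℕ) + 1) - μ k i with hY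
  have habs1 : ∀ k, 1 ≤ k → k < M → ∀ v : ℕ, ‖zk k ^ v‖ = 1 := by
    intro k hk1 hkM v
    rw [norm_pow, (zeta_spec M k hM hk1 hkM).2.1, one_pow]
  have habsμ : ∀ k, 1 ≤ k → k < M → ∀ i, ‖μ k i‖ ≤ 1 := by
    intro k hk1 hkM i
    rw [hμ]
    simp only
    rw [norm_mul, norm_inv, Complex.norm_natCast]
    calc (m:ℝ)⁻¹ * ‖∑ c : Fin m, zk k ^ ((i:ℕ)*m + (c:ℕ) + 1)‖
        ≤ (m:ℝ)⁻¹ * ∑ c : Fin m, ‖zk k ^ ((i:ℕ)*m + (c:ℕ) + 1)‖ := by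
          refine mul_le_mul_of_nonneg_left (norm_sum_le _ _) (by positivity)
      _ = (m:ℝ)⁻¹ * m := by
          rw [Finset.sum_congr rfl (fun c _ => habs1 k hk1 hkM _), Finset.sum_const,
            card_univ, Fintype.card_fin, nsmul_eq_mul, mul_one]
      _ = 1 := inv_mul_cancel₀ (by simp only [ne_eq, Nat.cast_eq_zero]; omega)
  have hY0 : ∀ k, ∀ i, ∑ c : Fin m, Y k i c = 0 := by
    intro k i
    rw [hY]
    simp only
    rw [Finset.sum_sub_distrib, Finset.sum_const, card_univ, Fintype.card_fin, nsmul_eq_mul, hμ]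
    simp only
    rw [← mul_assoc, mul_inv_cancel₀ hmC, one_mul, sub_self]
  have hYb : ∀ k, 1 ≤ k → k < M → ∀ i c, ‖Y k i c‖ ≤ 2 := by
    intro k hk1 hkM i c
    rw [hY]
    simp only
    calc ‖zk k ^ ((i:ℕ)*m + (c:ℕ) + 1) - μ k i‖
        ≤ ‖zk k ^ ((i:ℕ)*m + (c:ℕ) + 1)‖ + ‖μ k i‖ :=
          norm_sub_le _ _
      _ ≤ 1 + 1 := add_le_add (le_of_eq (habs1 k hk1 hkM _)) (habsμ k hk1 hkM i)
      _ = 2 := by norm_num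
  -- apply the moment bound for each k and sum over k
  set K : Finset ℕ := Finset.Icc 1 (M-1) with hK
  set C1 : ℕ := (q+1) * (q^(2*q) * t'^q) with hC1
  set C2 : ℕ := (M-1) * C1 * 4^q with hC2
  have hKcard : K.card = M - 1 := by rw [hK, Nat.card_Icc]; omega
  have hswap : ∑ σ : Fin t' → Fin m, ∑ k ∈ K, (Complex.normSq (∑ i, Y k i (σ i)))^q
      ≤ ∑ _σ : Fin t' → Fin m, ((C2 : ℕ) : ℝ) := by
    rw [Finset.sum_comm]
    calc ∑ k ∈ K, ∑ σ : Fin t' → Fin m, (Complex.normSq (∑ i, Y k i (σ i)))^q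
        ≤ ∑ _k ∈ K, ((C1 : ℕ) : ℝ) * ((m:ℝ)^t' * 4^q) := by
          refine Finset.sum_le_sum (fun k hk => ?_)
          rw [hK, Finset.mem_Icc] at hk
          exact moment_bound ht'1 hm1 (Y k) (hY0 k) (fun i c => hYb k hk.1 (by omega) i c)
      _ = ∑ _σ : Fin t' → Fin m, ((C2 : ℕ) : ℝ) := by
          rw [Finset.sum_const, Finset.sum_const, hKcard, card_univ, Fintype.card_fun,
            Fintype.card_fin, Fintype.card_fin, nsmul_eq_mul, nsmul_eq_mul, hC2]
          push_cast
          ring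
  haveI : Nonempty (Fin t' → Fin m) := ⟨fun _ => ⟨0, by omega⟩⟩
  obtain ⟨σ, -, hσ⟩ := Finset.exists_le_of_sum_le Finset.univ_nonempty hswap
  have hperk : ∀ k ∈ K, (Complex.normSq (∑ i, Y k i (σ i)))^q ≤ ((C2 : ℕ) : ℝ) := by
    intro k hk
    refine le_trans (Finset.single_le_sum (f := fun k => (Complex.normSq (∑ i, Y k i (σ i)))^q)
      (fun j _ => pow_nonneg (Complex.normSq_nonneg _) _) hk) hσ
  -- numeric bound on C2
  have hC2le : C2 ≤ (36*q^2*t')^q := by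
    have h1 : (36*q^2*t' : ℕ)^q = 9^q * 4^q * (q^(2*q) * t'^q) := by
      rw [show (36*q^2*t' : ℕ) = (9*4)*q^2*t' by norm_num]
      rw [mul_pow, mul_pow, mul_pow, ← pow_mul]
      ring
    rw [hC2, hC1, h1]
    calc (M-1) * ((q+1) * (q^(2*q) * t'^q)) * 4^q
        ≤ 4^q * ((q+1) * (q^(2*q) * t'^q)) * 4^q := by
          refine Nat.mul_le_mul_right _ (Nat.mul_le_mul_right _ (by omega))
      _ = ((q+1) * 4^q) * 4^q * (q^(2*q) * t'^q) := by ring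
      _ ≤ 9^q * 4^q * (q^(2*q) * t'^q) := by
          refine Nat.mul_le_mul_right _ (Nat.mul_le_mul_right _ (aux_pow_ineq q))
  -- the deviation bound
  have habsW : ∀ k ∈ K, ‖∑ i, Y k i (σ i)‖ ≤ 6*(q:ℝ)*Real.sqrt t' := by
    intro k hk
    have hβ0 : (0:ℝ) ≤ 6*(q:ℝ)*Real.sqrt t' := by positivity
    have hpow : (‖∑ i, Y k i (σ i)‖)^(2*q) ≤ (6*(q:ℝ)*Real.sqrt t')^(2*q) := by
      have hL : (‖∑ i, Y k i (σ i)‖)^(2*q)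
          = (Complex.normSq (∑ i, Y k i (σ i)))^q := by
        rw [pow_mul, Complex.sq_norm]
      have hR : (6*(q:ℝ)*Real.sqrt t')^(2*q) = ((36*q^2*t' : ℕ) : ℝ)^q := by
        rw [pow_mul]
        congr 1
        have : (6*(q:ℝ)*Real.sqrt t')^2 = 36*(q:ℝ)^2*(Real.sqrt t' * Real.sqrt t') := by ring
        rw [this, Real.mul_self_sqrt (by positivity)]
        push_cast
        ring
      rw [hL, hR]
      refine le_trans (hperk k hk) ?_
      exact_mod_cast Nat.cast_le.mpr hC2le
    exact (pow_le_pow_iff_left₀ (norm_nonneg _) hβ0 (by omega)).mp hpow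
  -- the set S
  set v : Fin t' → ℕ := fun i => (i:ℕ)*m + (σ i : ℕ) + 1 with hv
  have hσlt : ∀ i : Fin t', (σ i : ℕ) < m := fun i => (σ i).isLt
  have hvinj : Function.Injective v := by
    intro i1 i2 h12
    rw [hv] at h12
    simp only at h12
    have h1 := hσlt i1
    have h2 := hσlt i2
    refine Fin.ext ?_
    rcases Nat.lt_trichotomy (i1:ℕ) (i2:ℕ) with hlt | heq | hgt
    · exfalso
      have h3 : ((i1:ℕ)+1)*m ≤ (i2:ℕ)*m := Nat.mul_le_mul_right m hlt
      have h4 : ((i1:ℕ)+1)*m = (i1:ℕ)*m + m := by ring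
      omega
    · exact heq
    · exfalso
      have h3 : ((i2:ℕ)+1)*m ≤ (i1:ℕ)*m := Nat.mul_le_mul_right m hgt
      have h4 : ((i2:ℕ)+1)*m = (i2:ℕ)*m + m := by ring
      omega
  refine ⟨Finset.image v univ, ?_, ?_, ?_, ?_⟩
  · exact Finset.image_nonempty.mpr Finset.univ_nonempty
  · intro s hs
    obtain ⟨i, -, hi⟩ := Finset.mem_image.mp hs
    have h1 : ((i:ℕ)+1)*m ≤ t'*m := Nat.mul_le_mul_right m i.isLt
    have h2 : ((i:ℕ)+1)*m = (i:ℕ)*m + m := by ring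
    have h3 := hσlt i
    rw [hv] at hi
    simp only at hi
    omega
  · rw [Finset.card_image_of_injective _ hvinj, card_univ, Fintype.card_fin]
    exact ht't
  · intro k hk1 hkM'
    have hkM : k < M := by omega
    have hkK : k ∈ K := by rw [hK, Finset.mem_Icc]; exact ⟨hk1, hkM'⟩
    have hzs := zeta_spec M k hM hk1 hkM
    -- rewrite the sum over S
    have hcard : (Finset.image v univ).card = t' := by
      rw [Finset.card_image_of_injective _ hvinj, card_univ, Fintype.card_fin]
    have hsum1 : ∑ s ∈ Finset.image v univ, Complex.exp (2 * (Real.pi:ℂ) * Complex.I * k * (s:ℂ) / M)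
        = ∑ i : Fin t', zk k ^ (v i) := by
      rw [Finset.sum_image (fun x _ y _ h => hvinj h)]
      exact Finset.sum_congr rfl (fun i _ => hzs.1 (v i))
    have hsum2 : ∑ i : Fin t', zk k ^ (v i) = (∑ i, Y k i (σ i)) + ∑ i, μ k i := by
      rw [← Finset.sum_add_distrib]
      refine Finset.sum_congr rfl (fun i _ => ?_)
      rw [hY, hv]
      simp only
      ring
    -- bound on the mean part
    have hμsum : ‖∑ i, μ k i‖ ≤ 1 := by
      have hinner : ∑ i : Fin t', (∑ c : Fin m, zk k ^ ((i:ℕ)*m + (c:ℕ) + 1))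
          = ∑ s ∈ Finset.range (t'*m), zk k ^ (s+1) := by
        calc ∑ i : Fin t', (∑ c : Fin m, zk k ^ ((i:ℕ)*m + (c:ℕ) + 1))
            = ∑ i : Fin t', ∑ c ∈ Finset.range m, zk k ^ ((i:ℕ)*m + c + 1) := by
              refine Finset.sum_congr rfl (fun i _ => ?_)
              exact Fin.sum_univ_eq_sum_range (fun c => zk k ^ ((i:ℕ)*m + c + 1)) m
          _ = ∑ i ∈ Finset.range t', ∑ c ∈ Finset.range m, zk k ^ (i*m + c + 1) :=
              Fin.sum_univ_eq_sum_range (fun i => ∑ c ∈ Finset.range m, zk k ^ (i*m + c + 1)) t'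
          _ = ∑ s ∈ Finset.range (t'*m), zk k ^ (s+1) :=
              (sum_grid (fun s => zk k ^ (s+1)) m t').symm
      have hfull : ∑ s ∈ Finset.range M, zk k ^ (s+1) = 0 := by
        have : ∀ s : ℕ, zk k ^ (s+1) = zk k ^ s * zk k := fun s => pow_succ _ _
        rw [Finset.sum_congr rfl (fun s _ => this s), ← Finset.sum_mul, hzs.2.2, zero_mul]
      have hdecomp : ∑ s ∈ Finset.range M, zk k ^ (s+1)
          = ∑ s ∈ Finset.range (t'*m), zk k ^ (s+1) + ∑ s ∈ Finset.Ico (t'*m) M, zk k ^ (s+1) := by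
        rw [Finset.range_eq_Ico, Finset.range_eq_Ico]
        exact (Finset.sum_Ico_consecutive (fun s => zk k ^ (s+1)) (Nat.zero_le _) ht'm).symm
      have hsplit : ∑ s ∈ Finset.range (t'*m), zk k ^ (s+1)
          = - ∑ s ∈ Finset.Ico (t'*m) M, zk k ^ (s+1) := by
        rw [hdecomp] at hfull
        linear_combination hfull
      have htailabs : ‖∑ s ∈ Finset.Ico (t'*m) M, zk k ^ (s+1)‖
          ≤ ((M - t'*m : ℕ) : ℝ) := by
        calc ‖∑ s ∈ Finset.Ico (t'*m) M, zk k ^ (s+1)‖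
            ≤ ∑ s ∈ Finset.Ico (t'*m) M, ‖zk k ^ (s+1)‖ := norm_sum_le _ _
          _ = ∑ _s ∈ Finset.Ico (t'*m) M, (1:ℝ) := by
              exact Finset.sum_congr rfl (fun s _ => habs1 k hk1 hkM _)
          _ = ((M - t'*m : ℕ) : ℝ) := by
              rw [Finset.sum_const, Nat.card_Ico, nsmul_eq_mul, mul_one]
      have hμeq : ∑ i : Fin t', μ k i
          = (m:ℂ)⁻¹ * ∑ i : Fin t', (∑ c : Fin m, zk k ^ ((i:ℕ)*m + (c:ℕ) + 1)) := by
        rw [hμ, Finset.mul_sum]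
      rw [hμeq, hinner, hsplit]
      rw [norm_mul, norm_neg, norm_inv, Complex.norm_natCast]
      calc (m:ℝ)⁻¹ * ‖∑ s ∈ Finset.Ico (t'*m) M, zk k ^ (s+1)‖
          ≤ (m:ℝ)⁻¹ * ((M - t'*m : ℕ) : ℝ) := by
            refine mul_le_mul_of_nonneg_left htailabs (by positivity)
        _ ≤ (m:ℝ)⁻¹ * (m:ℝ) := by
            refine mul_le_mul_of_nonneg_left ?_ (by positivity)
            have : (M - t'*m : ℕ) ≤ m := by omega
            exact_mod_cast this
        _ = 1 := inv_mul_cancel₀ (by simp only [ne_eq, Nat.cast_eq_zero]; omega)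
    -- combine
    have hsq : (1:ℝ) ≤ Real.sqrt t' := Real.one_le_sqrt.mpr (by exact_mod_cast ht'1)
    have hq1R : (1:ℝ) ≤ (q:ℝ) := by exact_mod_cast hq1
    have habsZ : ‖∑ s ∈ Finset.image v univ,
        Complex.exp (2 * (Real.pi:ℂ) * Complex.I * k * (s:ℂ) / M)‖ ≤ 7*(q:ℝ)*Real.sqrt t' := by
      rw [hsum1, hsum2]
      calc ‖(∑ i, Y k i (σ i)) + ∑ i, μ k i‖
          ≤ ‖∑ i, Y k i (σ i)‖ + ‖∑ i, μ k i‖ :=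
            norm_add_le _ _
        _ ≤ 6*(q:ℝ)*Real.sqrt t' + 1 := add_le_add (habsW k hkK) hμsum
        _ ≤ 7*(q:ℝ)*Real.sqrt t' := by nlinarith
    rw [norm_div, Complex.norm_natCast, hcard, hsum1, hsum2]
    have ht'pos : (0:ℝ) < (t':ℝ) := by exact_mod_cast Nat.pos_of_ne_zero (by omega)
    have hs0 : Real.sqrt t' ≠ 0 := by positivity
    have htpos : (0:ℝ) < (t:ℝ) := by exact_mod_cast Nat.pos_of_ne_zero (by omega)
    have hstpos : (0:ℝ) < Real.sqrt t := Real.sqrt_pos.mpr htpos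
    have h2s : Real.sqrt t ≤ 2 * Real.sqrt t' := by
      calc Real.sqrt t ≤ Real.sqrt ((4:ℝ) * t') := by
            refine Real.sqrt_le_sqrt ?_
            push_cast
            exact_mod_cast (by exact_mod_cast ht4 : (t:ℝ) ≤ ((4*t' : ℕ) : ℝ))
        _ = 2 * Real.sqrt t' := by
            rw [show (4:ℝ) = 2^2 by norm_num, Real.sqrt_mul (by norm_num), Real.sqrt_sq (by norm_num)]
    calc ‖(∑ i, Y k i (σ i)) + ∑ i, μ k i‖ / (t':ℝ)
        ≤ (7*(q:ℝ)*Real.sqrt t') / (t':ℝ) := by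
          gcongr
          rw [hsum1, hsum2] at habsZ
          exact habsZ
      _ = 7*(q:ℝ) / Real.sqrt t' := by
          have hmss : Real.sqrt t' * Real.sqrt t' = (t':ℝ) := Real.mul_self_sqrt (by positivity)
          rw [div_eq_div_iff (ne_of_gt ht'pos) hs0]
          linear_combination (7*(q:ℝ)) * hmss
      _ ≤ 14*(q:ℝ) / Real.sqrt t := by
          rw [div_le_div_iff₀ (by positivity) hstpos]
          nlinarith [Real.sqrt_nonneg t', hq1R]

set_option maxHeartbeats 2000000 in
/-- Theorem 3.8 of the paper: an explicit low-discrepancy set. -/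
theorem explicit_low_discrepancy_set :
    ∃ Cstar : ℝ, 1 ≤ Cstar ∧
      ∀ M t : ℕ, 2 ≤ M → 2 ≤ t →
        ∃ S : Finset ℕ, S.Nonempty ∧ (∀ s ∈ S, 1 ≤ s ∧ s ≤ M) ∧ S.card ≤ t ∧
          discM M S (fun s => (s : ℤ)) ≤
            Cstar * (Real.logb 2 t / (t : ℝ) ^ ((1 : ℝ) / 4)) *
              (Real.logb 2 M / (1 + Real.logb 2 (Real.logb 2 M))) := by
  classical
  refine ⟨1000, by norm_num, ?_⟩
  intro M t hM ht
  set x := Real.logb 2 M with hx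
  set L := Real.logb 2 t with hLdef
  set τ := (t : ℝ) ^ ((1 : ℝ) / 4) with hτdef
  set l := Real.logb 2 x with hldef
  have hM1R : (1:ℝ) < (M:ℝ) := by exact_mod_cast (by omega : 1 < M)
  have ht1R : (1:ℝ) < (t:ℝ) := by exact_mod_cast (by omega : 1 < t)
  have hx1 : 1 ≤ x := by
    rw [hx, show (1:ℝ) = Real.logb 2 2 from (Real.logb_self_eq_one (by norm_num)).symm]
    exact (Real.logb_le_logb (by norm_num) (by norm_num) (by positivity)).mpr
      (by exact_mod_cast hM)
  have hL1 : 1 ≤ L := by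
    rw [hLdef, show (1:ℝ) = Real.logb 2 2 from (Real.logb_self_eq_one (by norm_num)).symm]
    exact (Real.logb_le_logb (by norm_num) (by norm_num) (by positivity)).mpr
      (by exact_mod_cast ht)
  have hl0 : 0 ≤ l := Real.logb_nonneg (by norm_num) hx1
  have hden : (0:ℝ) < 1 + l := by linarith
  have hτpos : (0:ℝ) < τ := Real.rpow_pos_of_pos (by positivity) _
  have hτ1 : (1:ℝ) ≤ τ := Real.one_le_rpow (by linarith) (by norm_num)
  have hR0 : (0:ℝ) ≤ 1000 * (L / τ) * (x / (1 + l)) := by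
    refine mul_nonneg (mul_nonneg (by norm_num) (div_nonneg (by linarith) (by linarith))) ?_
    exact div_nonneg (by linarith) (by linarith)
  have hxpos : (0:ℝ) < x := by linarith
  have hkey : 1 + l ≤ 3 * Real.sqrt x := by
    have hsx : (0:ℝ) < Real.sqrt x := Real.sqrt_pos.mpr hxpos
    have h1 : Real.log (Real.sqrt x) ≤ Real.sqrt x - 1 := Real.log_le_sub_one_of_pos hsx
    have h2 : Real.log x = 2 * Real.log (Real.sqrt x) := by
      rw [Real.log_sqrt (le_of_lt hxpos)]; ring
    have hlog2 : (2:ℝ)/3 ≤ Real.log 2 := by nlinarith [Real.log_two_gt_d9]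
    have hlogx0 : 0 ≤ Real.log x := Real.log_nonneg hx1
    have h3 : l = Real.log x / Real.log 2 := by rw [hldef, Real.logb]
    have h4 : Real.log x / Real.log 2 ≤ Real.log x / ((2:ℝ)/3) :=
      div_le_div_of_nonneg_left hlogx0 (by norm_num) hlog2
    have h5 : Real.log x / ((2:ℝ)/3) = (3/2) * Real.log x := by ring
    nlinarith
  have hcast : ∀ s : ℕ, ((((s:ℕ):ℤ)):ℂ) = (s:ℂ) := fun s => by push_cast; ring
  clear_value x L τ l
  by_cases hMt : M ≤ t
  · -- use the full interval {1, ..., M}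
    refine ⟨Finset.image (fun i => i + 1) (Finset.range M), ?_, ?_, ?_, ?_⟩
    · refine Finset.image_nonempty.mpr ⟨0, ?_⟩
      simp only [Finset.mem_range]; omega
    · intro s hs
      obtain ⟨i, hi, rfl⟩ := Finset.mem_image.mp hs
      rw [Finset.mem_range] at hi
      omega
    · rw [Finset.card_image_of_injective _ (add_left_injective 1), Finset.card_range]
      exact hMt
    · unfold discM
      refine Real.sSup_le ?_ hR0
      rintro d ⟨k, hk1, hkM, rfl⟩
      have hkM' : k < M := by omega
      have hzs := zeta_spec M k hM hk1 hkM'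
      have hinj1 : ∀ a ∈ Finset.range M, ∀ b ∈ Finset.range M, a + 1 = b + 1 → a = b :=
        fun a _ b _ h => by omega
      have hsum0 : (∑ s ∈ (Finset.image (fun i => i + 1) (Finset.range M) : Finset ℕ),
          Complex.exp (2 * (Real.pi:ℂ) * Complex.I * k * (s:ℂ) / M)) = 0 := by
        rw [Finset.sum_image hinj1]
        calc ∑ i ∈ Finset.range M, Complex.exp (2 * (Real.pi:ℂ) * Complex.I * k * ((i+1:ℕ):ℂ) / M)
            = ∑ i ∈ Finset.range M, Complex.exp (2 * (Real.pi:ℂ) * Complex.I * k / M) ^ (i+1) := by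
              refine Finset.sum_congr rfl (fun i _ => ?_)
              exact hzs.1 (i+1)
          _ = (∑ i ∈ Finset.range M, Complex.exp (2 * (Real.pi:ℂ) * Complex.I * k / M) ^ i)
                * Complex.exp (2 * (Real.pi:ℂ) * Complex.I * k / M) := by
              rw [Finset.sum_mul]
              exact Finset.sum_congr rfl (fun i _ => pow_succ _ _)
          _ = 0 := by rw [hzs.2.2, zero_mul]
      simp only [Int.cast_natCast]
      rw [hsum0]
      simpa using hR0
  · -- t < M
    push_neg at hMt
    by_cases hcase : Real.sqrt x ≤ 3 * τ
    · -- probabilistic construction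
      obtain ⟨S, hSne, hSmem, hScard, hSbound⟩ := case_b M t hM ht hMt
      refine ⟨S, hSne, hSmem, hScard, ?_⟩
      set q := Nat.clog 2 M with hq
      have hq1 : 1 ≤ q := by
        by_contra h
        have hq0 : q = 0 := by omega
        have := Nat.le_pow_clog (show 1 < 2 by norm_num) M
        rw [← hq, hq0] at this
        simp at this
        omega
      have hqx : (q:ℝ) ≤ x + 1 := by
        have h1 : 2 ^ (q - 1) < M := by
          have := Nat.pow_pred_clog_lt_self (show 1 < 2 by norm_num) (show 1 < M by omega)
          rw [← hq] at this
          exact_mod_cast this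
        have h2 : ((2:ℝ)) ^ ((q-1 : ℕ):ℕ) < (M:ℝ) := by exact_mod_cast h1
        have h3 : Real.logb 2 ((2:ℝ) ^ ((q-1:ℕ):ℕ)) ≤ x := by
          rw [hx]
          exact (Real.logb_le_logb (by norm_num) (by positivity) (by positivity)).mpr
            (le_of_lt h2)
        rw [Real.logb_pow, Real.logb_self_eq_one (by norm_num), mul_one] at h3
        have h4 : (((q-1:ℕ)):ℝ) = (q:ℝ) - 1 := by
          have : (1:ℕ) ≤ q := hq1
          push_cast [Nat.cast_sub this]
          ring
        rw [h4] at h3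
        linarith
      have hq2x : (q:ℝ) ≤ 2*x := by linarith
      have htpos : (0:ℝ) < (t:ℝ) := by linarith
      have hstpos : (0:ℝ) < Real.sqrt t := Real.sqrt_pos.mpr htpos
      have hτsq : Real.sqrt t = τ * τ := by
        rw [Real.sqrt_eq_rpow, hτdef, ← Real.rpow_add htpos]
        norm_num
      have hx9 : x ≤ 9 * Real.sqrt t := by
        have h1 : Real.sqrt x * Real.sqrt x = x := Real.mul_self_sqrt (le_of_lt hxpos)
        have h2 : Real.sqrt x * Real.sqrt x ≤ (3*τ) * (3*τ) :=
          mul_self_le_mul_self (Real.sqrt_nonneg x) hcase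
        nlinarith [hτsq]
      have hl6L : 1 + l ≤ 6 * L := by
        have h1 : l ≤ Real.logb 2 (9 * Real.sqrt t) := by
          rw [hldef]
          exact (Real.logb_le_logb (by norm_num) hxpos (by positivity)).mpr hx9
        have h2 : Real.logb 2 (9 * Real.sqrt t) = Real.logb 2 9 + Real.logb 2 (Real.sqrt t) :=
          Real.logb_mul (by norm_num) (by positivity)
        have h3 : Real.logb 2 9 ≤ 4 := by
          have h31 : Real.logb 2 9 ≤ Real.logb 2 16 :=
            (Real.logb_le_logb (by norm_num) (by norm_num) (by norm_num)).mpr (by norm_num)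
          have h32 : Real.logb 2 16 = 4 := by
            rw [show (16:ℝ) = 2^(4:ℕ) by norm_num, Real.logb_pow,
              Real.logb_self_eq_one (by norm_num)]
            norm_num
          linarith
        have h4 : Real.logb 2 (Real.sqrt t) = L / 2 := by
          rw [hLdef, Real.logb, Real.logb, Real.log_sqrt (by positivity)]
          ring
        rw [h2, h4] at h1
        linarith
      unfold discM
      refine Real.sSup_le ?_ hR0
      rintro d ⟨k, hk1, hkM, rfl⟩
      simp only [Int.cast_natCast]
      refine le_trans (hSbound k hk1 hkM) ?_
      -- 14 q / √t ≤ 1000 (L/τ)(x/(1+l))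
      have hτ0 : (0:ℝ) ≤ τ := le_of_lt hτpos
      have hrw : 1000 * (L / τ) * (x / (1 + l)) = (1000*L*x) / (τ*(1+l)) := by
        field_simp
      rw [hrw, div_le_div_iff₀ hstpos (mul_pos hτpos hden)]
      rw [hτsq]
      have e1 : (0:ℝ) ≤ τ*(1+l) := mul_nonneg hτ0 (le_of_lt hden)
      have e2 : τ*(1+l) ≤ τ*(6*L) := mul_le_mul_of_nonneg_left hl6L hτ0
      have hxLτ : (0:ℝ) ≤ x*L*τ :=
        mul_nonneg (mul_nonneg (le_of_lt hxpos) (by linarith)) hτ0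
      calc 14*(q:ℝ)*(τ*(1+l)) ≤ (28*x)*(τ*(6*L)) := by
            refine mul_le_mul (by linarith) e2 e1 (by linarith)
        _ = 168*(x*L*τ) := by ring
        _ ≤ (1000*τ)*(x*L*τ) := by
            refine mul_le_mul_of_nonneg_right (by linarith) hxLτ
        _ = 1000*L*x*(τ*τ) := by ring
    · -- trivial set {1}
      push_neg at hcase
      refine ⟨{1}, ⟨1, by simp⟩, ?_, ?_, ?_⟩
      · intro s hs
        rw [Finset.mem_singleton] at hs
        omega
      · simp only [Finset.card_singleton]; omega
      · unfold discM
        refine Real.sSup_le ?_ hR0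
        rintro d ⟨k, hk1, hkM, rfl⟩
        have hkM' : k < M := by omega
        have hzs := zeta_spec M k hM hk1 hkM'
        simp only [Int.cast_natCast]
        have h1 : (∑ i ∈ ({1} : Finset ℕ), Complex.exp (2 * (Real.pi:ℂ) * Complex.I * k * ((i:ℕ):ℂ) / M))
            = Complex.exp (2 * (Real.pi:ℂ) * Complex.I * k / M) ^ (1:ℕ) := by
          rw [Finset.sum_singleton]
          have := hzs.1 1
          rw [← this]
        rw [h1]
        have h2 : ‖Complex.exp (2 * (Real.pi:ℂ) * Complex.I * k / M) ^ (1:ℕ)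
            / ((({1} : Finset ℕ).card : ℕ) : ℂ)‖ = 1 := by
          rw [Finset.card_singleton, norm_div, norm_pow, hzs.2.1]
          norm_num
        rw [h2]
        -- 1 ≤ RHS
        have h3 : Real.sqrt x / 3 ≤ x / (1 + l) := by
          rw [div_le_div_iff₀ (by norm_num) hden]
          have h31 : Real.sqrt x * Real.sqrt x = x := Real.mul_self_sqrt (le_of_lt hxpos)
          nlinarith [Real.sqrt_nonneg x, hkey]
        have hτne : τ ≠ 0 := ne_of_gt hτpos
        have h4 : (1:ℝ) ≤ 1000 * (1 / τ) * (Real.sqrt x / 3) := by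
          have hlt : τ ≤ Real.sqrt x / 3 := by linarith
          have h5 : 1000 * (1/τ) * τ ≤ 1000 * (1/τ) * (Real.sqrt x/3) :=
            mul_le_mul_of_nonneg_left hlt
              (mul_nonneg (by norm_num) (one_div_nonneg.mpr (le_of_lt hτpos)))
          have h6 : 1000 * (1/τ) * τ = 1000 := by
            rw [mul_assoc, one_div, inv_mul_cancel₀ hτne, mul_one]
          linarith
        calc (1:ℝ) ≤ 1000 * (1 / τ) * (Real.sqrt x / 3) := h4
          _ ≤ 1000 * (L / τ) * (x / (1 + l)) := by
              refine mul_le_mul ?_ h3 (by positivity) ?_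
              · refine mul_le_mul_of_nonneg_left ?_ (by norm_num)
                exact (div_le_div_iff_of_pos_right hτpos).mpr hL1
              · exact mul_nonneg (by norm_num) (div_nonneg (by linarith) (le_of_lt hτpos))
end
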